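/- arXiv:1102.5491 — 5 statements merged into one kernel-verified Lean document; each statement's English description precedes it below -/
import Mathlib

section
/- As t → ∞, e^{−2θt} ∫_0^t X_s² ds = e^{−2θt} ∫_0^t e^{2θs} ξ_s² ds converges almost surely to ξ_∞² / (2θ), where ξ_∞ is the almost sure limit of ξ_t as t → ∞. -/
open MeasureTheory ProbabilityTheory Real Filter

lemma my_integral_exp_mul (c : ℝ) (hc : c ≠ 0) (a b : ℝ) :
    ∫ s in a..b, Real.exp (c * s) = (Real.exp (c * b) - Real.exp (c * a)) / c := by
  have hd : ∀ x ∈ Set.uIcc a b, HasDerivAt (fun y => Real.exp (c * y) / c) (Real.exp (c * x)) x := by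
    intro x _
    have h1 : HasDerivAt (fun y : ℝ => c * y) c x := by
      simpa using (hasDerivAt_id x).const_mul c
    have h2 : HasDerivAt (fun y : ℝ => Real.exp (c * y)) (Real.exp (c * x) * c) x :=
      (Real.hasDerivAt_exp (c * x)).comp x h1
    simpa [mul_div_assoc, mul_div_cancel_right₀ _ hc] using h2.div_const c
  rw [intervalIntegral.integral_eq_sub_of_hasDerivAt hd
    (((Real.continuous_exp.comp (continuous_const.mul continuous_id))).intervalIntegrable _ _)]
  ring

lemma my_exp_neg_tendsto (θ : ℝ) (hθ : 0 < θ) :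
    Tendsto (fun t : ℝ => Real.exp (-2 * θ * t)) atTop (nhds 0) := by
  have h1 : Tendsto (fun t : ℝ => Real.exp (2 * θ * t)) atTop atTop :=
    Real.tendsto_exp_atTop.comp (Tendsto.const_mul_atTop (by positivity) tendsto_id)
  have h2 := h1.inv_tendsto_atTop
  refine h2.congr fun t => ?_
  rw [Pi.inv_apply, ← Real.exp_neg]
  ring_nf

lemma tail_tendsto_zero (θ : ℝ) (hθ : 0 < θ) (h : ℝ → ℝ) (hc : Continuous h)
    (h0 : Tendsto h atTop (nhds 0)) :
    Tendsto (fun t => Real.exp (-2 * θ * t) * ∫ s in (0:ℝ)..t, Real.exp (2 * θ * s) * h s)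
      atTop (nhds 0) := by
  rw [NormedAddCommGroup.tendsto_nhds_zero]
  intro ε hε
  obtain ⟨N, hN⟩ := Metric.tendsto_atTop.mp h0 (θ * ε) (by positivity)
  set T : ℝ := max N 0 with hT
  have hTN : N ≤ T := le_max_left _ _
  set C : ℝ := |∫ s in (0:ℝ)..T, Real.exp (2 * θ * s) * h s| with hCdef
  have hC0 : 0 ≤ C := abs_nonneg _
  have hcont : Continuous fun s => Real.exp (2 * θ * s) * h s :=
    (Real.continuous_exp.comp (continuous_const.mul continuous_id)).mul hc
  have h1 : Tendsto (fun t : ℝ => Real.exp (-2 * θ * t) * C) atTop (nhds 0) := by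
    simpa using (my_exp_neg_tendsto θ hθ).mul_const C
  have hev : ∀ᶠ t : ℝ in atTop, Real.exp (-2 * θ * t) * C < ε / 2 :=
    (h1.eventually (eventually_lt_nhds (by positivity : (0:ℝ) < ε / 2)))
  filter_upwards [hev, eventually_ge_atTop T] with t ht1 ht2
  have hsplit : (∫ s in (0:ℝ)..t, Real.exp (2 * θ * s) * h s)
      = (∫ s in (0:ℝ)..T, Real.exp (2 * θ * s) * h s)
        + ∫ s in T..t, Real.exp (2 * θ * s) * h s := by
    rw [intervalIntegral.integral_add_adjacent_intervals
      (hcont.intervalIntegrable _ _) (hcont.intervalIntegrable _ _)]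
  have htail : |∫ s in T..t, Real.exp (2 * θ * s) * h s| ≤ (ε / 2) * Real.exp (2 * θ * t) := by
    have hb1 : |∫ s in T..t, Real.exp (2 * θ * s) * h s|
        ≤ ∫ s in T..t, |Real.exp (2 * θ * s) * h s| :=
      intervalIntegral.abs_integral_le_integral_abs ht2
    have hb2 : (∫ s in T..t, |Real.exp (2 * θ * s) * h s|)
        ≤ ∫ s in T..t, Real.exp (2 * θ * s) * (θ * ε) := by
      apply intervalIntegral.integral_mono_on ht2
      · exact (hcont.abs).intervalIntegrable _ _
      · exact ((Real.continuous_exp.comp (continuous_const.mul continuous_id)).mul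
          continuous_const).intervalIntegrable _ _
      · intro s hs
        rw [abs_mul, Real.abs_exp]
        apply mul_le_mul_of_nonneg_left _ (Real.exp_nonneg _)
        have hsN : N ≤ s := le_trans hTN hs.1
        have := hN s hsN
        rw [Real.dist_eq, sub_zero] at this
        exact le_of_lt this
    have hb3 : (∫ s in T..t, Real.exp (2 * θ * s) * (θ * ε))
        = (θ * ε) * ((Real.exp (2 * θ * t) - Real.exp (2 * θ * T)) / (2 * θ)) := by
      rw [intervalIntegral.integral_mul_const, my_integral_exp_mul (2 * θ) (by positivity)]
      ring
    have hb4 : (θ * ε) * ((Real.exp (2 * θ * t) - Real.exp (2 * θ * T)) / (2 * θ))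
        ≤ (ε / 2) * Real.exp (2 * θ * t) := by
      rw [mul_div_assoc']
      rw [div_le_iff₀ (by positivity : (0:ℝ) < 2 * θ)]
      have hexp : 0 < Real.exp (2 * θ * T) := Real.exp_pos _
      nlinarith [mul_nonneg (mul_nonneg hθ.le hε.le) hexp.le]
    calc |∫ s in T..t, Real.exp (2 * θ * s) * h s|
        ≤ ∫ s in T..t, |Real.exp (2 * θ * s) * h s| := hb1
      _ ≤ ∫ s in T..t, Real.exp (2 * θ * s) * (θ * ε) := hb2
      _ = (θ * ε) * ((Real.exp (2 * θ * t) - Real.exp (2 * θ * T)) / (2 * θ)) := hb3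
      _ ≤ (ε / 2) * Real.exp (2 * θ * t) := hb4
  have hkey : ‖Real.exp (-2 * θ * t) * ∫ s in (0:ℝ)..t, Real.exp (2 * θ * s) * h s‖
      ≤ Real.exp (-2 * θ * t) * C + ε / 2 := by
    rw [Real.norm_eq_abs, abs_mul, Real.abs_exp, hsplit]
    have habs : |(∫ s in (0:ℝ)..T, Real.exp (2 * θ * s) * h s)
        + ∫ s in T..t, Real.exp (2 * θ * s) * h s|
        ≤ C + (ε / 2) * Real.exp (2 * θ * t) :=
      (abs_add_le _ _).trans (add_le_add le_rfl htail)
    calc Real.exp (-2 * θ * t) * |(∫ s in (0:ℝ)..T, Real.exp (2 * θ * s) * h s)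
          + ∫ s in T..t, Real.exp (2 * θ * s) * h s|
        ≤ Real.exp (-2 * θ * t) * (C + (ε / 2) * Real.exp (2 * θ * t)) :=
          mul_le_mul_of_nonneg_left habs (Real.exp_nonneg _)
      _ = Real.exp (-2 * θ * t) * C
            + (ε / 2) * (Real.exp (-2 * θ * t) * Real.exp (2 * θ * t)) := by ring
      _ = Real.exp (-2 * θ * t) * C + ε / 2 := by
          rw [← Real.exp_add]; ring_nf; simp
  calc ‖Real.exp (-2 * θ * t) * ∫ s in (0:ℝ)..t, Real.exp (2 * θ * s) * h s‖
      ≤ Real.exp (-2 * θ * t) * C + ε / 2 := hkey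
    _ < ε / 2 + ε / 2 := by linarith
    _ = ε := by ring

lemma main_aux (θ : ℝ) (hθ : 0 < θ) (g : ℝ → ℝ) (hc : Continuous g) (L : ℝ)
    (hg : Tendsto g atTop (nhds L)) :
    Tendsto (fun t => Real.exp (-2 * θ * t) * ∫ s in (0:ℝ)..t, Real.exp (2 * θ * s) * g s)
      atTop (nhds (L / (2 * θ))) := by
  have hcontE : Continuous fun s : ℝ => Real.exp (2 * θ * s) :=
    Real.continuous_exp.comp (continuous_const.mul continuous_id)
  have hsplit : ∀ t : ℝ, Real.exp (-2 * θ * t) * (∫ s in (0:ℝ)..t, Real.exp (2 * θ * s) * g s)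
      = Real.exp (-2 * θ * t) * (∫ s in (0:ℝ)..t, Real.exp (2 * θ * s) * (g s - L))
        + (L / (2 * θ)) * (1 - Real.exp (-2 * θ * t)) := by
    intro t
    have h1 : (∫ s in (0:ℝ)..t, Real.exp (2 * θ * s) * g s)
        = (∫ s in (0:ℝ)..t, Real.exp (2 * θ * s) * (g s - L))
          + ∫ s in (0:ℝ)..t, Real.exp (2 * θ * s) * L := by
      rw [← intervalIntegral.integral_add (f := fun s => Real.exp (2 * θ * s) * (g s - L))
        (g := fun s => Real.exp (2 * θ * s) * L)
        ((hcontE.mul (hc.sub continuous_const)).intervalIntegrable _ _)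
        ((hcontE.mul continuous_const).intervalIntegrable _ _)]
      congr 1
      ext s
      ring
    have h2 : (∫ s in (0:ℝ)..t, Real.exp (2 * θ * s) * L)
        = L * ((Real.exp (2 * θ * t) - 1) / (2 * θ)) := by
      rw [intervalIntegral.integral_mul_const, my_integral_exp_mul (2 * θ) (by positivity)]
      simp [mul_comm]
    rw [h1, h2, mul_add]
    congr 1
    have hee : Real.exp (-2 * θ * t) * Real.exp (2 * θ * t) = 1 := by
      rw [← Real.exp_add]; ring_nf; simp
    rw [show Real.exp (-2 * θ * t) * (L * ((Real.exp (2 * θ * t) - 1) / (2 * θ)))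
        = (L / (2 * θ)) * (Real.exp (-2 * θ * t) * Real.exp (2 * θ * t) - Real.exp (-2 * θ * t))
        from by ring, hee]
  have ht1 : Tendsto (fun t => Real.exp (-2 * θ * t)
      * ∫ s in (0:ℝ)..t, Real.exp (2 * θ * s) * (g s - L)) atTop (nhds 0) :=
    tail_tendsto_zero θ hθ (fun s => g s - L) (hc.sub continuous_const)
      (by simpa using hg.sub_const L)
  have ht2 : Tendsto (fun t : ℝ => (L / (2 * θ)) * (1 - Real.exp (-2 * θ * t)))
      atTop (nhds (L / (2 * θ))) := by
    have : Tendsto (fun t : ℝ => 1 - Real.exp (-2 * θ * t)) atTop (nhds 1) := by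
      simpa using (tendsto_const_nhds.sub (my_exp_neg_tendsto θ hθ))
    simpa using (this.const_mul (L / (2 * θ)))
  have := ht1.add ht2
  rw [zero_add] at this
  exact this.congr fun t => (hsplit t).symm

/-- The process `ξ_t = e^{−θt} B_t + θ ∫_0^t e^{−θs} B_s ds`, the pathwise
(integration-by-parts) expression for the Young integral `∫_0^t e^{−θs} dB_s`. -/
noncomputable def xiProc {Ω : Type*} (θ : ℝ) (B : ℝ → Ω → ℝ) (t : ℝ) (ω : Ω) : ℝ :=
  Real.exp (-θ * t) * B t ω + θ * ∫ s in (0:ℝ)..t, Real.exp (-θ * s) * B s ω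

/-- The fractional Ornstein–Uhlenbeck process `X_t = e^{θt} ξ_t`. -/
noncomputable def ouProc {Ω : Type*} (θ : ℝ) (B : ℝ → Ω → ℝ) (t : ℝ) (ω : Ω) : ℝ :=
  Real.exp (θ * t) * xiProc θ B t ω

/-- If `B` is a fractional Brownian motion of Hurst index `H ∈ (1/2, 1)`, `θ > 0`,
and `ξ_∞` is the almost sure limit of `ξ_t` as `t → ∞`, then
`e^{−2θt} ∫_0^t X_s² ds = e^{−2θt} ∫_0^t e^{2θs} ξ_s² ds → ξ_∞²/(2θ)` almost surely. -/
theorem normalized_energy_tendsto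
    {Ω : Type*} [MeasurableSpace Ω] (P : Measure Ω) [IsProbabilityMeasure P]
    (H θ : ℝ) (hH1 : 1 / 2 < H) (hH2 : H < 1) (hθ : 0 < θ)
    (B : ℝ → Ω → ℝ)
    (hBmeas : ∀ t : ℝ, Measurable (B t))
    (hBcont : ∀ ω : Ω, Continuous fun t : ℝ => B t ω)
    (hB0 : ∀ ω : Ω, B 0 ω = 0)
    (hBgauss : ∀ (n : ℕ) (c : Fin n → ℝ) (t : Fin n → ℝ), (∀ i, 0 ≤ t i) →
      ∃ v : NNReal,
        Measure.map (fun ω => ∑ i, c i * B (t i) ω) P = gaussianReal 0 v)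
    (hBcov : ∀ s t : ℝ, 0 ≤ s → 0 ≤ t →
      ∫ ω, B t ω * B s ω ∂P =
        (t ^ (2 * H) + s ^ (2 * H) - |t - s| ^ (2 * H)) / 2)
    (ξ_inf : Ω → ℝ)
    (hlim : ∀ᵐ ω ∂P, Tendsto (fun t : ℝ => xiProc θ B t ω) atTop (nhds (ξ_inf ω))) :
    ∀ᵐ ω ∂P,
      Tendsto (fun t : ℝ =>
          Real.exp (-2 * θ * t) * ∫ s in (0:ℝ)..t, (ouProc θ B s ω) ^ 2)
        atTop (nhds ((ξ_inf ω) ^ 2 / (2 * θ))) := by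
  filter_upwards [hlim] with ω hω
  have hcB : Continuous fun t : ℝ => B t ω := hBcont ω
  have hcxi : Continuous fun t : ℝ => xiProc θ B t ω := by
    unfold xiProc
    apply Continuous.add
    · exact (Real.continuous_exp.comp (continuous_const.mul continuous_id)).mul hcB
    · apply continuous_const.mul
      apply intervalIntegral.continuous_primitive
      intro a b
      exact ((Real.continuous_exp.comp (continuous_const.mul continuous_id)).mul
        hcB).intervalIntegrable _ _
  have hg : Tendsto (fun t : ℝ => (xiProc θ B t ω) ^ 2) atTop (nhds ((ξ_inf ω) ^ 2)) :=
    hω.pow 2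
  have := main_aux θ hθ (fun t => (xiProc θ B t ω) ^ 2) (hcxi.pow 2) ((ξ_inf ω) ^ 2) hg
  refine this.congr fun t => ?_
  congr 1
  apply intervalIntegral.integral_congr
  intro s _
  have hsq : Real.exp (θ * s) ^ 2 = Real.exp (2 * θ * s) := by
    rw [sq, ← Real.exp_add]; ring_nf
  simp only [ouProc, mul_pow, hsq]
end

section
/- For every t ≥ 0, H(2H−1) ∫_t^∞ ∫_t^∞ e^{−θr} e^{−θs} |r−s|^{2H−2} dr ds = (HΓ(2H)/θ^{2H}) · e^{−2θt}; in particular this quantity tends to 0 as t → ∞. -/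
open MeasureTheory Real Filter Set
open scoped ENNReal

section Aux

/-- Measurability of the real-valued integrand. -/
lemma tail_aux_measurable (θ c : ℝ) :
    Measurable fun p : ℝ × ℝ =>
      Real.exp (-θ * p.1) * Real.exp (-θ * p.2) * |p.1 - p.2| ^ c := by
  refine Measurable.mul (Measurable.mul ?_ ?_) ?_
  · exact Real.measurable_exp.comp (measurable_fst.const_mul (-θ))
  · exact Real.measurable_exp.comp (measurable_snd.const_mul (-θ))
  · exact (measurable_fst.sub measurable_snd).abs.pow measurable_const

/-- Translation invariance for lower Lebesgue integrals over `Ioi`. -/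
lemma tail_aux_translate (g : ℝ → ℝ≥0∞) (t : ℝ) :
    ∫⁻ x in Set.Ioi t, g x = ∫⁻ x in Set.Ioi 0, g (x + t) := by
  have h := (measurePreserving_add_right (volume : Measure ℝ) t).setLIntegral_comp_preimage_emb
    (MeasurableEquiv.addRight t).measurableEmbedding g (Set.Ioi t)
  simp only [preimage_add_const_Ioi, sub_self] at h
  exact h.symm

/-- The Gamma-type lower Lebesgue integral. -/
lemma tail_aux_gamma {b c : ℝ} (hb : 0 < b) (hc : -1 < c) :
    ∫⁻ x in Set.Ioi 0, ENNReal.ofReal (x ^ c * Real.exp (-(b * x)))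
      = ENNReal.ofReal ((1 / b) ^ (c + 1) * Real.Gamma (c + 1)) := by
  rw [← ofReal_integral_eq_lintegral_ofReal]
  · congr 1
    have := Real.integral_rpow_mul_exp_neg_mul_Ioi (show 0 < c + 1 by linarith) hb
    simpa [add_sub_cancel_right] using this
  · have h := integrableOn_rpow_mul_exp_neg_mul_rpow hc zero_lt_one hb
    exact (by simpa [Real.rpow_one, neg_mul] using h :
      IntegrableOn (fun x : ℝ => x ^ c * Real.exp (-(b * x))) (Set.Ioi 0) volume)
  · exact (ae_restrict_iff' measurableSet_Ioi).2 (Filter.Eventually.of_forall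
      fun x hx => mul_nonneg (Real.rpow_nonneg (le_of_lt hx) c) (Real.exp_pos _).le)

/-- The exponential lower Lebesgue integral. -/
lemma tail_aux_exp {b : ℝ} (hb : 0 < b) :
    ∫⁻ x in Set.Ioi 0, ENNReal.ofReal (Real.exp (-(b * x))) = ENNReal.ofReal (1 / b) := by
  have h := tail_aux_gamma hb (show (-1 : ℝ) < 0 by norm_num)
  simp only [Real.rpow_zero, one_mul, zero_add, Real.rpow_one, Real.Gamma_one, mul_one] at h
  exact h

end Aux

section Main

variable {θ c : ℝ}

/-- The inner tail integral over `Ioi u`. -/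
lemma tail_inner_eq (hθ : 0 < θ) (hc : -1 < c) {u : ℝ} (hu : 0 < u) :
    ∫⁻ v in Set.Ioi u, ENNReal.ofReal (Real.exp (-θ * u) * Real.exp (-θ * v) * |u - v| ^ c)
      = ENNReal.ofReal (Real.exp (-θ * u) * Real.exp (-θ * u)) *
          ENNReal.ofReal ((1 / θ) ^ (c + 1) * Real.Gamma (c + 1)) := by
  rw [tail_aux_translate (fun v => ENNReal.ofReal
      (Real.exp (-θ * u) * Real.exp (-θ * v) * |u - v| ^ c)) u]
  rw [← tail_aux_gamma hθ hc, ← lintegral_const_mul' _ _ ENNReal.ofReal_ne_top]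
  refine setLIntegral_congr_fun measurableSet_Ioi (fun w hw => ?_)
  rw [← ENNReal.ofReal_mul (by positivity)]
  congr 1
  have h1 : u - (w + u) = -w := by ring
  have h2 : Real.exp (-θ * (w + u)) = Real.exp (-(θ * w)) * Real.exp (-θ * u) := by
    rw [← Real.exp_add]; ring_nf
  rw [h1, abs_neg, abs_of_pos hw, h2]
  ring

/-- The double integral over `Ioi 0 × Ioi 0`. -/
lemma tail_J_eq (hθ : 0 < θ) (hc : -1 < c) :
    ∫⁻ u in Set.Ioi 0, ∫⁻ v in Set.Ioi 0,
        ENNReal.ofReal (Real.exp (-θ * u) * Real.exp (-θ * v) * |u - v| ^ c)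
      = ENNReal.ofReal (1 / (2 * θ)) *
          ENNReal.ofReal ((1 / θ) ^ (c + 1) * Real.Gamma (c + 1)) * 2 := by
  set μ := (volume : Measure ℝ).restrict (Set.Ioi 0) with hμ
  set F : ℝ → ℝ → ℝ≥0∞ := fun u v =>
    ENNReal.ofReal (Real.exp (-θ * u) * Real.exp (-θ * v) * |u - v| ^ c) with hF
  have hmeas : Measurable fun p : ℝ × ℝ => F p.1 p.2 :=
    (tail_aux_measurable θ c).ennreal_ofReal
  have hFsymm : ∀ u v, F u v = F v u := by
    intro u v
    simp only [hF]
    rw [abs_sub_comm]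
    ring_nf
  -- indicator representations of the two halves
  have hind1 : (fun p : ℝ × ℝ => (Set.Iio p.1).indicator (F p.1) p.2)
      = fun p : ℝ × ℝ => ({q : ℝ × ℝ | q.2 < q.1}).indicator (fun q => F q.1 q.2) p := by
    funext p
    by_cases h : p.2 < p.1 <;> simp [Set.indicator, h]
  have hind2 : (fun p : ℝ × ℝ => (Set.Ioi p.1).indicator (F p.1) p.2)
      = fun p : ℝ × ℝ => ({q : ℝ × ℝ | q.1 < q.2}).indicator (fun q => F q.1 q.2) p := by
    funext p
    by_cases h : p.1 < p.2 <;> simp [Set.indicator, h]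
  have hm1 : Measurable fun p : ℝ × ℝ => (Set.Iio p.1).indicator (F p.1) p.2 := by
    rw [hind1]
    exact hmeas.indicator (measurableSet_lt measurable_snd measurable_fst)
  have hm2 : Measurable fun p : ℝ × ℝ => (Set.Ioi p.1).indicator (F p.1) p.2 := by
    rw [hind2]
    exact hmeas.indicator (measurableSet_lt measurable_fst measurable_snd)
  have hg1m : Measurable fun u => ∫⁻ v, (Set.Iio u).indicator (F u) v ∂μ :=
    hm1.lintegral_prod_right'
  -- splitting the inner integral
  have hsplit : ∀ u : ℝ, ∫⁻ v, F u v ∂μ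
      = (∫⁻ v, (Set.Iio u).indicator (F u) v ∂μ)
        + ∫⁻ v, (Set.Ioi u).indicator (F u) v ∂μ := by
    intro u
    rw [lintegral_indicator measurableSet_Iio, lintegral_indicator measurableSet_Ioi,
      ← lintegral_union measurableSet_Ioi
        ((Set.Iio_disjoint_Ici le_rfl).mono_right Set.Ioi_subset_Ici_self)]
    have huniv : (Set.Iio u ∪ Set.Ioi u : Set ℝ) =ᵐ[μ] (Set.univ : Set ℝ) := by
      rw [ae_eq_univ, Set.Iio_union_Ioi, compl_compl, hμ,
        Measure.restrict_apply (measurableSet_singleton u)]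
      exact measure_mono_null Set.inter_subset_left (measure_singleton u)
    calc ∫⁻ v, F u v ∂μ
        = ∫⁻ v in Set.univ, F u v ∂μ := by rw [Measure.restrict_univ]
      _ = ∫⁻ v in Set.Iio u ∪ Set.Ioi u, F u v ∂μ := setLIntegral_congr huniv.symm
  -- the swap/symmetry step
  have hswap : ∫⁻ u, (∫⁻ v, (Set.Iio u).indicator (F u) v ∂μ) ∂μ
      = ∫⁻ u, (∫⁻ v, (Set.Ioi u).indicator (F u) v ∂μ) ∂μ := by
    rw [lintegral_lintegral_swap (by exact (hind1 ▸ hm1).aemeasurable)]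
    refine lintegral_congr fun x => lintegral_congr fun y => ?_
    by_cases h : x < y
    · simp [Set.indicator, h, hFsymm x y]
    · simp [Set.indicator, h]
  -- value of the second half
  have hg2val : ∫⁻ u, (∫⁻ v, (Set.Ioi u).indicator (F u) v ∂μ) ∂μ
      = ENNReal.ofReal (1 / (2 * θ)) *
          ENNReal.ofReal ((1 / θ) ^ (c + 1) * Real.Gamma (c + 1)) := by
    have hueq : ∀ u ∈ Set.Ioi (0 : ℝ),
        (∫⁻ v, (Set.Ioi u).indicator (F u) v ∂μ)
          = ENNReal.ofReal (Real.exp (-(2 * θ * u))) *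
              ENNReal.ofReal ((1 / θ) ^ (c + 1) * Real.Gamma (c + 1)) := by
      intro u hu
      rw [hμ, lintegral_indicator measurableSet_Ioi,
        Measure.restrict_restrict measurableSet_Ioi,
        Set.inter_eq_left.mpr (Set.Ioi_subset_Ioi (le_of_lt hu)),
        tail_inner_eq hθ hc hu]
      congr 2
      rw [← Real.exp_add]
      ring_nf
    calc ∫⁻ u, (∫⁻ v, (Set.Ioi u).indicator (F u) v ∂μ) ∂μ
        = ∫⁻ u in Set.Ioi 0, ENNReal.ofReal (Real.exp (-(2 * θ * u))) *
            ENNReal.ofReal ((1 / θ) ^ (c + 1) * Real.Gamma (c + 1)) := by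
          rw [hμ]
          exact setLIntegral_congr_fun measurableSet_Ioi hueq
      _ = (∫⁻ u in Set.Ioi 0, ENNReal.ofReal (Real.exp (-(2 * θ * u)))) *
            ENNReal.ofReal ((1 / θ) ^ (c + 1) * Real.Gamma (c + 1)) :=
          lintegral_mul_const' _ _ ENNReal.ofReal_ne_top
      _ = ENNReal.ofReal (1 / (2 * θ)) *
            ENNReal.ofReal ((1 / θ) ^ (c + 1) * Real.Gamma (c + 1)) := by
          congr 1
          have := tail_aux_exp (show 0 < 2 * θ by linarith)
          simpa [mul_assoc] using this
  calc ∫⁻ u in Set.Ioi 0, ∫⁻ v in Set.Ioi 0, F u v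
      = ∫⁻ u, ((∫⁻ v, (Set.Iio u).indicator (F u) v ∂μ)
          + ∫⁻ v, (Set.Ioi u).indicator (F u) v ∂μ) ∂μ := lintegral_congr hsplit
    _ = (∫⁻ u, (∫⁻ v, (Set.Iio u).indicator (F u) v ∂μ) ∂μ)
          + ∫⁻ u, (∫⁻ v, (Set.Ioi u).indicator (F u) v ∂μ) ∂μ :=
        lintegral_add_left hg1m _
    _ = (∫⁻ u, (∫⁻ v, (Set.Ioi u).indicator (F u) v ∂μ) ∂μ) * 2 := by
        rw [hswap]; ring
    _ = ENNReal.ofReal (1 / (2 * θ)) *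
          ENNReal.ofReal ((1 / θ) ^ (c + 1) * Real.Gamma (c + 1)) * 2 := by rw [hg2val]

/-- Translation of the double tail integral. -/
lemma tail_L_eq (θ c t : ℝ) :
    ∫⁻ r in Set.Ioi t, ∫⁻ s in Set.Ioi t,
        ENNReal.ofReal (Real.exp (-θ * r) * Real.exp (-θ * s) * |r - s| ^ c)
      = ENNReal.ofReal (Real.exp (-θ * t) * Real.exp (-θ * t)) *
          ∫⁻ u in Set.Ioi 0, ∫⁻ v in Set.Ioi 0,
            ENNReal.ofReal (Real.exp (-θ * u) * Real.exp (-θ * v) * |u - v| ^ c) := by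
  rw [tail_aux_translate (fun r => ∫⁻ s in Set.Ioi t,
    ENNReal.ofReal (Real.exp (-θ * r) * Real.exp (-θ * s) * |r - s| ^ c)) t]
  have hinner : ∀ u : ℝ, ∫⁻ s in Set.Ioi t,
      ENNReal.ofReal (Real.exp (-θ * (u + t)) * Real.exp (-θ * s) * |u + t - s| ^ c)
      = ENNReal.ofReal (Real.exp (-θ * t) * Real.exp (-θ * t)) *
          ∫⁻ v in Set.Ioi 0,
            ENNReal.ofReal (Real.exp (-θ * u) * Real.exp (-θ * v) * |u - v| ^ c) := by
    intro u
    rw [tail_aux_translate (fun s => ENNReal.ofReal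
      (Real.exp (-θ * (u + t)) * Real.exp (-θ * s) * |u + t - s| ^ c)) t]
    rw [← lintegral_const_mul' _ _ ENNReal.ofReal_ne_top]
    refine lintegral_congr fun v => ?_
    rw [← ENNReal.ofReal_mul (by positivity)]
    congr 1
    have h1 : u + t - (v + t) = u - v := by ring
    have h2 : Real.exp (-θ * (u + t)) = Real.exp (-θ * u) * Real.exp (-θ * t) := by
      rw [← Real.exp_add]; ring_nf
    have h3 : Real.exp (-θ * (v + t)) = Real.exp (-θ * v) * Real.exp (-θ * t) := by
      rw [← Real.exp_add]; ring_nf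
    rw [h1, h2, h3]
    ring
  simp only [hinner]
  exact lintegral_const_mul' _ _ ENNReal.ofReal_ne_top

/-- Conversion of the double Bochner integral into a double lower Lebesgue integral. -/
lemma tail_bochner (θ c t : ℝ)
    (hfin : (∫⁻ r in Set.Ioi t, ∫⁻ s in Set.Ioi t,
        ENNReal.ofReal (Real.exp (-θ * r) * Real.exp (-θ * s) * |r - s| ^ c)) ≠ ⊤) :
    ∫ r in Set.Ioi t, ∫ s in Set.Ioi t,
        Real.exp (-θ * r) * Real.exp (-θ * s) * |r - s| ^ c
      = (∫⁻ r in Set.Ioi t, ∫⁻ s in Set.Ioi t,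
          ENNReal.ofReal (Real.exp (-θ * r) * Real.exp (-θ * s) * |r - s| ^ c)).toReal := by
  have hreal := tail_aux_measurable θ c
  have hmeas : Measurable fun p : ℝ × ℝ =>
      ENNReal.ofReal (Real.exp (-θ * p.1) * Real.exp (-θ * p.2) * |p.1 - p.2| ^ c) :=
    hreal.ennreal_ofReal
  have hinner : ∀ r : ℝ, ∫ s in Set.Ioi t,
      Real.exp (-θ * r) * Real.exp (-θ * s) * |r - s| ^ c
      = (∫⁻ s in Set.Ioi t,
          ENNReal.ofReal (Real.exp (-θ * r) * Real.exp (-θ * s) * |r - s| ^ c)).toReal := by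
    intro r
    refine integral_eq_lintegral_of_nonneg_ae (Filter.Eventually.of_forall fun s => by positivity)
      ((hreal.comp (measurable_const.prodMk measurable_id)).aestronglyMeasurable)
  simp only [hinner]
  have hG : Measurable fun r => ∫⁻ s in Set.Ioi t,
      ENNReal.ofReal (Real.exp (-θ * r) * Real.exp (-θ * s) * |r - s| ^ c) :=
    hmeas.lintegral_prod_right'
  rw [integral_eq_lintegral_of_nonneg_ae
    (Filter.Eventually.of_forall fun r => ENNReal.toReal_nonneg)
    hG.ennreal_toReal.aestronglyMeasurable]
  congr 1
  refine lintegral_congr_ae ?_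
  filter_upwards [ae_lt_top hG hfin] with r hr
  exact ENNReal.ofReal_toReal hr.ne

end Main

/-- For `1/2 < H < 1` and `θ > 0`: for every `t ≥ 0`,
`H(2H−1) ∫_t^∞ ∫_t^∞ e^{−θr} e^{−θs} |r−s|^{2H−2} dr ds = (HΓ(2H)/θ^{2H}) e^{−2θt}`;
in particular this quantity tends to `0` as `t → ∞`. -/
theorem tail_double_integral_eq_and_tendsto
    (H θ : ℝ) (hH1 : 1 / 2 < H) (hH2 : H < 1) (hθ : 0 < θ) :
    (∀ t : ℝ, 0 ≤ t →
      H * (2 * H - 1) *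
          ∫ r in Set.Ioi t, ∫ s in Set.Ioi t,
            Real.exp (-θ * r) * Real.exp (-θ * s) * |r - s| ^ (2 * H - 2) =
        (H * Real.Gamma (2 * H) / θ ^ (2 * H)) * Real.exp (-2 * θ * t)) ∧
    Tendsto (fun t : ℝ =>
        H * (2 * H - 1) *
          ∫ r in Set.Ioi t, ∫ s in Set.Ioi t,
            Real.exp (-θ * r) * Real.exp (-θ * s) * |r - s| ^ (2 * H - 2))
      atTop (nhds 0) := by
  have hc : (-1 : ℝ) < 2 * H - 2 := by linarith
  have hc1 : (2 * H - 2 : ℝ) + 1 = 2 * H - 1 := by ring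
  have ha : (0 : ℝ) < 2 * H - 1 := by linarith
  have hGpos : 0 < Real.Gamma (2 * H - 1) := Real.Gamma_pos_of_pos ha
  have key : ∀ t : ℝ,
      H * (2 * H - 1) *
          ∫ r in Set.Ioi t, ∫ s in Set.Ioi t,
            Real.exp (-θ * r) * Real.exp (-θ * s) * |r - s| ^ (2 * H - 2) =
        (H * Real.Gamma (2 * H) / θ ^ (2 * H)) * Real.exp (-2 * θ * t) := by
    intro t
    have hJ := tail_J_eq hθ hc
    have hL := tail_L_eq θ (2 * H - 2) t
    rw [hJ] at hL
    have hfin : (∫⁻ r in Set.Ioi t, ∫⁻ s in Set.Ioi t,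
        ENNReal.ofReal (Real.exp (-θ * r) * Real.exp (-θ * s) * |r - s| ^ (2 * H - 2))) ≠ ⊤ := by
      rw [hL]
      exact ENNReal.mul_ne_top ENNReal.ofReal_ne_top
        (ENNReal.mul_ne_top (ENNReal.mul_ne_top ENNReal.ofReal_ne_top ENNReal.ofReal_ne_top)
          (by norm_num))
    rw [tail_bochner θ (2 * H - 2) t hfin, hL]
    rw [hc1]
    rw [ENNReal.toReal_mul, ENNReal.toReal_mul, ENNReal.toReal_mul,
      ENNReal.toReal_ofReal (by positivity), ENNReal.toReal_ofReal (by positivity),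
      ENNReal.toReal_ofReal
        (mul_nonneg (Real.rpow_nonneg (by positivity) _) hGpos.le),
      ENNReal.toReal_ofNat]
    have hGamma : Real.Gamma (2 * H) = (2 * H - 1) * Real.Gamma (2 * H - 1) := by
      have h := Real.Gamma_add_one (ne_of_gt ha)
      rw [show (2 * H - 1 : ℝ) + 1 = 2 * H by ring] at h
      exact h
    have hrp : (1 / θ) ^ (2 * H - 1 : ℝ) = (θ ^ (2 * H - 1 : ℝ))⁻¹ := by
      rw [one_div]
      exact Real.inv_rpow hθ.le _
    have hmulp : θ ^ (2 * H - 1 : ℝ) * θ = θ ^ (2 * H : ℝ) := by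
      have h := Real.rpow_add_one (ne_of_gt hθ) (2 * H - 1)
      rw [show (2 * H - 1 : ℝ) + 1 = 2 * H by ring] at h
      rw [h]
    have hexp : Real.exp (-2 * θ * t) = Real.exp (-θ * t) * Real.exp (-θ * t) := by
      rw [← Real.exp_add]; ring_nf
    have hXpos : (0 : ℝ) < θ ^ (2 * H - 1 : ℝ) := Real.rpow_pos_of_pos hθ _
    rw [hGamma, hrp, hexp, ← hmulp]
    field_simp
  constructor
  · exact fun t _ => key t
  · have heq : (fun t : ℝ =>
        H * (2 * H - 1) *
          ∫ r in Set.Ioi t, ∫ s in Set.Ioi t,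
            Real.exp (-θ * r) * Real.exp (-θ * s) * |r - s| ^ (2 * H - 2))
        = fun t : ℝ => (H * Real.Gamma (2 * H) / θ ^ (2 * H)) * Real.exp (-2 * θ * t) :=
      funext fun t => key t
    rw [heq]
    have h1 : Tendsto (fun t : ℝ => -2 * θ * t) atTop atBot := by
      apply Filter.Tendsto.const_mul_atTop_of_neg (show (-2 : ℝ) * θ < 0 by linarith)
      exact tendsto_id
    have h2 : Tendsto (fun t : ℝ => Real.exp (-2 * θ * t)) atTop (nhds 0) :=
      Real.tendsto_exp_atBot.comp h1
    simpa using h2.const_mul (H * Real.Gamma (2 * H) / θ ^ (2 * H))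
end

section
/- For every α with 1/2 < α < H, H(2H−1) ∫_0^∞ ∫_0^∞ u^{−α} v^{−α} e^{−θu} e^{−θv} |u−v|^{2H−2} du dv ≤ 2H(2H−1) Γ(2H−2α) Β(2H−1, 1−α) / θ^{2H−2α} < ∞, where Β denotes the Beta function. -/
open MeasureTheory Real Set

private lemma betaAux_integrable {a b : ℝ} (ha : -1 < a) (ha0 : a ≤ 0) (hb : -1 < b)
    (hb0 : b ≤ 0) :
    IntervalIntegrable (fun x : ℝ => x ^ a * (1 - x) ^ b) volume 0 1 := by
  have h1 : IntervalIntegrable (fun x : ℝ => x ^ a) volume 0 1 :=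
    intervalIntegral.intervalIntegrable_rpow' ha
  have h2 : IntervalIntegrable (fun x : ℝ => (1 - x) ^ b) volume 0 1 := by
    have := (intervalIntegral.intervalIntegrable_rpow' (a := 0) (b := 1) hb).comp_sub_left 1
    exact (by simpa using this : IntervalIntegrable _ volume 1 0).symm
  have hg : IntervalIntegrable
      (fun x : ℝ => (1/2 : ℝ) ^ b * x ^ a + (1/2 : ℝ) ^ a * (1 - x) ^ b) volume 0 1 :=
    (h1.const_mul _).add (h2.const_mul _)
  rw [intervalIntegrable_iff_integrableOn_Ioc_of_le (by norm_num)] at hg ⊢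
  refine hg.integrable.mono ?_ ?_
  · exact ((measurable_id.pow_const a).mul
      ((measurable_const.sub measurable_id).pow_const b)).aestronglyMeasurable
  · filter_upwards [ae_restrict_mem measurableSet_Ioc] with x hx
    have hx0 : 0 < x := hx.1
    have hx1 : x ≤ 1 := hx.2
    have hxa : 0 ≤ x ^ a := rpow_nonneg hx0.le _
    have hxb : 0 ≤ (1 - x) ^ b := rpow_nonneg (by linarith) _
    have hca : 0 ≤ (1/2 : ℝ) ^ a := rpow_nonneg (by norm_num) _
    have hcb : 0 ≤ (1/2 : ℝ) ^ b := rpow_nonneg (by norm_num) _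
    rw [Real.norm_of_nonneg (mul_nonneg hxa hxb), Real.norm_of_nonneg (by positivity)]
    rcases le_total x (1/2) with h | h
    · have : (1 - x) ^ b ≤ (1/2 : ℝ) ^ b :=
        rpow_le_rpow_of_nonpos (by norm_num) (by linarith) hb0
      nlinarith [mul_le_mul_of_nonneg_left this hxa]
    · have : x ^ a ≤ (1/2 : ℝ) ^ a :=
        rpow_le_rpow_of_nonpos (by norm_num) h ha0
      nlinarith [mul_le_mul_of_nonneg_right this hxb]

private lemma scaledBeta {a b u : ℝ} (ha : -1 < a) (ha0 : a ≤ 0) (hb : -1 < b)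
    (hb0 : b ≤ 0) (hu : 0 < u) :
    IntegrableOn (fun v : ℝ => v ^ a * (u - v) ^ b) (Set.Ioc 0 u) volume ∧
    ∫ v in Set.Ioc 0 u, v ^ a * (u - v) ^ b =
      u ^ (a + b + 1) * ∫ x in (0:ℝ)..1, x ^ a * (1 - x) ^ b := by
  have hφ := betaAux_integrable ha ha0 hb hb0
  have hEq : Set.EqOn (fun v : ℝ => v ^ a * (u - v) ^ b)
      (fun v : ℝ => u ^ a * u ^ b * ((v / u) ^ a * (1 - v / u) ^ b)) (Set.Ioc 0 u) := by
    intro v hv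
    have hv0 : 0 < v := hv.1
    have hvu : v ≤ u := hv.2
    have h2 : (1 : ℝ) - v / u = (u - v) / u := by field_simp
    have h1 : (v / u) ^ a = v ^ a / u ^ a := Real.div_rpow hv0.le hu.le a
    have h3 : ((u - v) / u) ^ b = (u - v) ^ b / u ^ b :=
      Real.div_rpow (by linarith) hu.le b
    have hua : u ^ a ≠ 0 := (Real.rpow_pos_of_pos hu a).ne'
    have hub : u ^ b ≠ 0 := (Real.rpow_pos_of_pos hu b).ne'
    simp only [h2, h1, h3]
    field_simp
  have hcomp : IntervalIntegrable (fun v : ℝ => (v / u) ^ a * (1 - v / u) ^ b) volume 0 u := by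
    have := hφ.comp_mul_right (c := u⁻¹)
    rw [zero_div, one_div, inv_inv] at this
    simpa only [← div_eq_mul_inv] using this
  have hcomp' : IntervalIntegrable
      (fun v : ℝ => u ^ a * u ^ b * ((v / u) ^ a * (1 - v / u) ^ b)) volume 0 u :=
    hcomp.const_mul _
  rw [intervalIntegrable_iff_integrableOn_Ioc_of_le hu.le] at hcomp'
  have hint : IntegrableOn (fun v : ℝ => v ^ a * (u - v) ^ b) (Set.Ioc 0 u) volume :=
    hcomp'.congr_fun (fun v hv => (hEq hv).symm) measurableSet_Ioc
  refine ⟨hint, ?_⟩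
  have hpow : u ^ (a + b + 1) = u ^ a * u ^ b * u := by
    rw [Real.rpow_add hu, Real.rpow_add hu, Real.rpow_one]
  calc ∫ v in Set.Ioc 0 u, v ^ a * (u - v) ^ b
      = ∫ v in Set.Ioc 0 u, u ^ a * u ^ b * ((v / u) ^ a * (1 - v / u) ^ b) :=
        setIntegral_congr_fun measurableSet_Ioc hEq
    _ = ∫ v in (0:ℝ)..u, u ^ a * u ^ b * ((v / u) ^ a * (1 - v / u) ^ b) :=
        (intervalIntegral.integral_of_le hu.le).symm
    _ = u ^ a * u ^ b * ∫ v in (0:ℝ)..u, ((v / u) ^ a * (1 - v / u) ^ b) :=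
        intervalIntegral.integral_const_mul _ _
    _ = u ^ a * u ^ b * (u • ∫ x in (0:ℝ)/u..u/u, x ^ a * (1 - x) ^ b) := by
        rw [intervalIntegral.integral_comp_div (fun x : ℝ => x ^ a * (1 - x) ^ b) hu.ne']
    _ = u ^ (a + b + 1) * ∫ x in (0:ℝ)..1, x ^ a * (1 - x) ^ b := by
        rw [zero_div, div_self hu.ne', smul_eq_mul, hpow]; ring

private lemma gammaScaled {s θ : ℝ} (hs : 0 < s) (hθ : 0 < θ) :
    IntegrableOn (fun u : ℝ => u ^ (s - 1) * Real.exp (-θ * u)) (Set.Ioi 0) volume ∧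
    ∫ u in Set.Ioi (0:ℝ), u ^ (s - 1) * Real.exp (-θ * u) = Real.Gamma s / θ ^ s := by
  have hg : IntegrableOn (fun x : ℝ => Real.exp (-x) * x ^ (s - 1)) (Set.Ioi 0) volume :=
    Real.GammaIntegral_convergent hs
  have h1 : IntegrableOn (fun x : ℝ => Real.exp (-(θ * x)) * (θ * x) ^ (s - 1))
      (Set.Ioi 0) volume := by
    have := (integrableOn_Ioi_comp_mul_left_iff
      (fun x : ℝ => Real.exp (-x) * x ^ (s - 1)) 0 hθ).2
    simpa using this (by simpa using hg)
  have hEq : Set.EqOn (fun x : ℝ => θ ^ (1 - s) * (Real.exp (-(θ * x)) * (θ * x) ^ (s - 1)))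
      (fun u : ℝ => u ^ (s - 1) * Real.exp (-θ * u)) (Set.Ioi 0) := by
    intro x hx
    have hx0 : 0 < x := hx
    have : (θ * x) ^ (s - 1) = θ ^ (s - 1) * x ^ (s - 1) := Real.mul_rpow hθ.le hx0.le
    simp only [this, neg_mul]
    have h1s : θ ^ (1 - s) * θ ^ (s - 1) = 1 := by
      rw [← Real.rpow_add hθ]; norm_num
    calc θ ^ (1 - s) * (Real.exp (-(θ * x)) * (θ ^ (s - 1) * x ^ (s - 1)))
        = (θ ^ (1 - s) * θ ^ (s - 1)) * (x ^ (s - 1) * Real.exp (-(θ * x))) := by ring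
      _ = x ^ (s - 1) * Real.exp (-(θ * x)) := by rw [h1s, one_mul]
  have hint : IntegrableOn (fun u : ℝ => u ^ (s - 1) * Real.exp (-θ * u))
      (Set.Ioi 0) volume :=
    IntegrableOn.congr_fun (h1.const_mul (θ ^ (1 - s))) hEq measurableSet_Ioi
  refine ⟨hint, ?_⟩
  have h2 := MeasureTheory.integral_comp_mul_left_Ioi
    (fun x : ℝ => Real.exp (-x) * x ^ (s - 1)) 0 hθ
  rw [mul_zero] at h2
  rw [← Real.Gamma_eq_integral hs] at h2
  -- h2 : ∫ x in Ioi 0, exp (-(θ * x)) * (θ * x) ^ (s - 1) = θ⁻¹ • Γ s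
  have h3 : ∫ x in Set.Ioi (0:ℝ), Real.exp (-(θ * x)) * (θ * x) ^ (s - 1)
      = θ ^ (s - 1) * ∫ u in Set.Ioi (0:ℝ), u ^ (s - 1) * Real.exp (-θ * u) := by
    rw [← integral_const_mul]
    refine setIntegral_congr_fun measurableSet_Ioi (fun x hx => ?_)
    have hx0 : 0 < x := hx
    have : (θ * x) ^ (s - 1) = θ ^ (s - 1) * x ^ (s - 1) := Real.mul_rpow hθ.le hx0.le
    simp only [this, neg_mul]
    ring
  rw [h3, smul_eq_mul] at h2
  have hθs : θ ^ (s - 1) = θ ^ s / θ := by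
    rw [Real.rpow_sub hθ, Real.rpow_one]
  have hne1 : θ ^ s ≠ 0 := (Real.rpow_pos_of_pos hθ _).ne'
  have hne2 : (θ : ℝ) ≠ 0 := hθ.ne'
  rw [hθs] at h2
  field_simp at h2 ⊢
  linarith [h2]

set_option maxHeartbeats 1000000 in
/-- For `1/2 < H < 1`, `θ > 0` and every `α` with `1/2 < α < H`,
`H(2H−1) ∫_0^∞ ∫_0^∞ u^{−α} v^{−α} e^{−θu} e^{−θv} |u−v|^{2H−2} du dv
  ≤ 2H(2H−1) Γ(2H−2α) Β(2H−1, 1−α) / θ^{2H−2α} < ∞`,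
where `Β(a,b) = ∫_0^1 x^{a−1}(1−x)^{b−1} dx`.  Finiteness is expressed by
integrability of the (nonnegative) integrand on `(0,∞)²`. -/
theorem weighted_improper_double_integral_bound
    (H θ : ℝ) (hH1 : 1 / 2 < H) (hH2 : H < 1) (hθ : 0 < θ)
    (α : ℝ) (hα1 : 1 / 2 < α) (hα2 : α < H) :
    IntegrableOn
        (fun p : ℝ × ℝ => p.1 ^ (-α) * p.2 ^ (-α) *
          Real.exp (-θ * p.1) * Real.exp (-θ * p.2) * |p.1 - p.2| ^ (2 * H - 2))
        (Set.Ioi 0 ×ˢ Set.Ioi 0) volume ∧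
    H * (2 * H - 1) *
        ∫ u in Set.Ioi (0:ℝ), ∫ v in Set.Ioi (0:ℝ),
          u ^ (-α) * v ^ (-α) * Real.exp (-θ * u) * Real.exp (-θ * v) *
            |u - v| ^ (2 * H - 2) ≤
      2 * H * (2 * H - 1) * Real.Gamma (2 * H - 2 * α) *
          (∫ x in (0:ℝ)..1, x ^ (2 * H - 1 - 1) * (1 - x) ^ (1 - α - 1)) /
        θ ^ (2 * H - 2 * α) := by
  have h2H1 : 0 < 2 * H - 1 := by linarith
  have hs : 0 < 2 * H - 2 * α := by linarith
  have ha : -1 < -α := by linarith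
  have ha0 : -α ≤ 0 := by linarith
  have hb : (-1 : ℝ) < 2 * H - 2 := by linarith
  have hb0 : 2 * H - 2 ≤ 0 := by linarith
  set s : ℝ := 2 * H - 2 * α with hs_def
  set f : ℝ × ℝ → ℝ := fun p : ℝ × ℝ => p.1 ^ (-α) * p.2 ^ (-α) *
      Real.exp (-θ * p.1) * Real.exp (-θ * p.2) * |p.1 - p.2| ^ (2 * H - 2) with hf_def
  set B : ℝ := ∫ x in (0:ℝ)..1, x ^ (-α) * (1 - x) ^ (2 * H - 2) with hB_def
  have hB0 : 0 ≤ B := by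
    refine intervalIntegral.integral_nonneg (by norm_num) (fun x hx => ?_)
    exact mul_nonneg (Real.rpow_nonneg hx.1 _) (Real.rpow_nonneg (by linarith [hx.2]) _)
  have hΓ : 0 < Real.Gamma s := Real.Gamma_pos_of_pos hs
  have hθs : 0 < θ ^ s := Real.rpow_pos_of_pos hθ s
  have hfm : Measurable f := by
    rw [hf_def]; measurability
  set μ : Measure ℝ := volume.restrict (Set.Ioi (0:ℝ)) with hμ_def
  have hprod : μ.prod μ = volume.restrict (Set.Ioi 0 ×ˢ Set.Ioi 0) := by
    rw [hμ_def, Measure.prod_restrict, ← Measure.volume_eq_prod]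
  obtain ⟨hgInt, hgVal⟩ := gammaScaled hs hθ
  have hFm : Measurable fun p : ℝ × ℝ => ENNReal.ofReal (f p) := hfm.ennreal_ofReal
  have hTmeas : MeasurableSet {p : ℝ × ℝ | p.2 ≤ p.1} :=
    measurableSet_le measurable_snd measurable_fst
  -- key per-slice bound
  have hKey : ∀ u : ℝ, 0 < u →
      ∫⁻ v in Set.Iic u, ENNReal.ofReal (f (u, v)) ∂μ ≤
        ENNReal.ofReal (B * (u ^ (s - 1) * Real.exp (-θ * u))) := by
    intro u hu
    have hres : μ.restrict (Set.Iic u) = volume.restrict (Set.Ioc 0 u) := by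
      rw [hμ_def, Measure.restrict_restrict measurableSet_Iic, Set.Iic_inter_Ioi]
    rw [hres]
    obtain ⟨hbInt, hbVal⟩ := scaledBeta (u := u) ha ha0 hb hb0 hu
    have hgu : IntegrableOn
        (fun v : ℝ => u ^ (-α) * Real.exp (-θ * u) * (v ^ (-α) * (u - v) ^ (2 * H - 2)))
        (Set.Ioc 0 u) volume := hbInt.const_mul _
    have hnn : 0 ≤ᵐ[volume.restrict (Set.Ioc 0 u)]
        fun v : ℝ => u ^ (-α) * Real.exp (-θ * u) * (v ^ (-α) * (u - v) ^ (2 * H - 2)) := by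
      filter_upwards [ae_restrict_mem measurableSet_Ioc] with v hv
      have h1 : (0:ℝ) < v := hv.1
      have h2 : (0:ℝ) ≤ u - v := by linarith [hv.2]
      positivity
    calc ∫⁻ v in Set.Ioc 0 u, ENNReal.ofReal (f (u, v))
        ≤ ∫⁻ v in Set.Ioc 0 u, ENNReal.ofReal
            (u ^ (-α) * Real.exp (-θ * u) * (v ^ (-α) * (u - v) ^ (2 * H - 2))) := by
          refine lintegral_mono_ae ?_
          filter_upwards [ae_restrict_mem measurableSet_Ioc] with v hv
          apply ENNReal.ofReal_le_ofReal
          have h1 : (0:ℝ) < v := hv.1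
          have h2 : (0:ℝ) ≤ u - v := by linarith [hv.2]
          have he : Real.exp (-θ * v) ≤ 1 := by
            rw [Real.exp_le_one_iff]; nlinarith
          have habs : |u - v| = u - v := abs_of_nonneg h2
          rw [hf_def]
          simp only [habs]
          calc u ^ (-α) * v ^ (-α) * Real.exp (-θ * u) * Real.exp (-θ * v) *
                (u - v) ^ (2 * H - 2)
              = (u ^ (-α) * Real.exp (-θ * u) * (v ^ (-α) * (u - v) ^ (2 * H - 2))) *
                  Real.exp (-θ * v) := by ring
            _ ≤ (u ^ (-α) * Real.exp (-θ * u) * (v ^ (-α) * (u - v) ^ (2 * H - 2))) * 1 := by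
                have hnn0 : 0 ≤ u ^ (-α) * Real.exp (-θ * u) *
                    (v ^ (-α) * (u - v) ^ (2 * H - 2)) := by positivity
                exact mul_le_mul_of_nonneg_left he hnn0
            _ = u ^ (-α) * Real.exp (-θ * u) * (v ^ (-α) * (u - v) ^ (2 * H - 2)) := mul_one _
      _ = ENNReal.ofReal (∫ v in Set.Ioc 0 u,
            u ^ (-α) * Real.exp (-θ * u) * (v ^ (-α) * (u - v) ^ (2 * H - 2))) :=
          (ofReal_integral_eq_lintegral_ofReal hgu hnn).symm
      _ ≤ ENNReal.ofReal (B * (u ^ (s - 1) * Real.exp (-θ * u))) := by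
          apply le_of_eq
          rw [integral_const_mul, hbVal]
          congr 1
          have hh : u ^ (-α) * u ^ (-α + (2 * H - 2) + 1) = u ^ (s - 1) := by
            rw [← Real.rpow_add hu]
            congr 1
            rw [hs_def]; ring
          calc u ^ (-α) * Real.exp (-θ * u) * (u ^ (-α + (2 * H - 2) + 1) * B)
              = u ^ (-α) * u ^ (-α + (2 * H - 2) + 1) * (Real.exp (-θ * u) * B) := by ring
            _ = u ^ (s - 1) * (Real.exp (-θ * u) * B) := by rw [hh]
            _ = B * (u ^ (s - 1) * Real.exp (-θ * u)) := by ring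
  -- bound over the region below the diagonal
  have hT : ∫⁻ p in {p : ℝ × ℝ | p.2 ≤ p.1}, ENNReal.ofReal (f p) ∂(μ.prod μ) ≤
      ENNReal.ofReal (B * (Real.Gamma s / θ ^ s)) := by
    rw [← lintegral_indicator hTmeas]
    rw [lintegral_prod _ ((hFm.indicator hTmeas).aemeasurable)]
    have step1 : ∀ u : ℝ, (∫⁻ v, Set.indicator {p : ℝ × ℝ | p.2 ≤ p.1}
        (fun p => ENNReal.ofReal (f p)) (u, v) ∂μ) =
        ∫⁻ v in Set.Iic u, ENNReal.ofReal (f (u, v)) ∂μ := by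
      intro u
      rw [← lintegral_indicator measurableSet_Iic]
      apply lintegral_congr
      intro v
      by_cases h : v ≤ u
      · rw [Set.indicator_of_mem (by exact h : (u, v) ∈ {p : ℝ × ℝ | p.2 ≤ p.1}),
          Set.indicator_of_mem (by exact h)]
      · rw [Set.indicator_of_notMem (by exact h : (u, v) ∉ {p : ℝ × ℝ | p.2 ≤ p.1}),
          Set.indicator_of_notMem (by exact h)]
    calc (∫⁻ u, ∫⁻ v, Set.indicator {p : ℝ × ℝ | p.2 ≤ p.1}
            (fun p => ENNReal.ofReal (f p)) (u, v) ∂μ ∂μ)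
        = ∫⁻ u, (∫⁻ v in Set.Iic u, ENNReal.ofReal (f (u, v)) ∂μ) ∂μ :=
          lintegral_congr step1
      _ ≤ ∫⁻ u in Set.Ioi (0:ℝ), ENNReal.ofReal
            (B * (u ^ (s - 1) * Real.exp (-θ * u))) := by
          rw [hμ_def]
          refine lintegral_mono_ae ?_
          filter_upwards [ae_restrict_mem measurableSet_Ioi] with u hu
          exact hKey u hu
      _ = ENNReal.ofReal (∫ u in Set.Ioi (0:ℝ),
            B * (u ^ (s - 1) * Real.exp (-θ * u))) := by
          refine (ofReal_integral_eq_lintegral_ofReal (hgInt.const_mul B) ?_).symm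
          filter_upwards [ae_restrict_mem measurableSet_Ioi] with u hu
          have hu0 : (0:ℝ) < u := hu
          positivity
      _ = ENNReal.ofReal (B * (Real.Gamma s / θ ^ s)) := by
          rw [integral_const_mul, hgVal]
  -- the region above the diagonal is bounded by the one below
  have hcompl : ∫⁻ p in {p : ℝ × ℝ | p.2 ≤ p.1}ᶜ, ENNReal.ofReal (f p) ∂(μ.prod μ) ≤
      ∫⁻ p in {p : ℝ × ℝ | p.2 ≤ p.1}, ENNReal.ofReal (f p) ∂(μ.prod μ) := by
    have hS : MeasurableSet {p : ℝ × ℝ | p.2 < p.1} :=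
      measurableSet_lt measurable_snd measurable_fst
    have hpre : {p : ℝ × ℝ | p.2 ≤ p.1}ᶜ = Prod.swap ⁻¹' {p : ℝ × ℝ | p.2 < p.1} := by
      ext p
      simp [not_le]
    have hsymF : ∀ p : ℝ × ℝ, ENNReal.ofReal (f p.swap) = ENNReal.ofReal (f p) := by
      intro p
      congr 1
      rw [hf_def]
      simp only [Prod.fst_swap, Prod.snd_swap]
      rw [abs_sub_comm]
      ring
    have hswap : MeasurePreserving Prod.swap (μ.prod μ) (μ.prod μ) :=
      Measure.measurePreserving_swap
    calc ∫⁻ p in {p : ℝ × ℝ | p.2 ≤ p.1}ᶜ, ENNReal.ofReal (f p) ∂(μ.prod μ)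
        = ∫⁻ p in Prod.swap ⁻¹' {p : ℝ × ℝ | p.2 < p.1},
            ENNReal.ofReal (f p.swap) ∂(μ.prod μ) := by
          rw [hpre]
          exact lintegral_congr fun p => (hsymF p).symm
      _ = ∫⁻ p in {p : ℝ × ℝ | p.2 < p.1}, ENNReal.ofReal (f p) ∂(μ.prod μ) :=
          hswap.setLIntegral_comp_preimage hS hFm
      _ ≤ ∫⁻ p in {p : ℝ × ℝ | p.2 ≤ p.1}, ENNReal.ofReal (f p) ∂(μ.prod μ) :=
          lintegral_mono_set (by
            intro p hp
            have : p.2 < p.1 := hp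
            exact le_of_lt this)
  have hlin : ∫⁻ p, ENNReal.ofReal (f p) ∂(μ.prod μ) ≤
      ENNReal.ofReal (2 * (B * (Real.Gamma s / θ ^ s))) := by
    rw [← lintegral_add_compl (fun p => ENNReal.ofReal (f p)) hTmeas]
    have h2 : ENNReal.ofReal (2 * (B * (Real.Gamma s / θ ^ s))) =
        ENNReal.ofReal (B * (Real.Gamma s / θ ^ s)) +
          ENNReal.ofReal (B * (Real.Gamma s / θ ^ s)) := by
      rw [← ENNReal.ofReal_add (by positivity) (by positivity)]
      congr 1
      ring
    rw [h2]
    exact add_le_add hT (hcompl.trans hT)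
  -- nonnegativity a.e.
  have hnn_ae : 0 ≤ᵐ[μ.prod μ] f := by
    rw [hprod]
    filter_upwards [ae_restrict_mem (measurableSet_Ioi.prod measurableSet_Ioi)] with p hp
    have h1 : (0:ℝ) < p.1 := hp.1
    have h2 : (0:ℝ) < p.2 := hp.2
    rw [hf_def]
    positivity
  have hint1 : Integrable f (μ.prod μ) := by
    refine ⟨hfm.aestronglyMeasurable, ?_⟩
    rw [hasFiniteIntegral_iff_ofReal hnn_ae]
    exact lt_of_le_of_lt hlin ENNReal.ofReal_lt_top
  have part1 : IntegrableOn f (Set.Ioi 0 ×ˢ Set.Ioi 0) volume := by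
    rw [IntegrableOn, ← hprod]
    exact hint1
  refine ⟨part1, ?_⟩
  -- iterated integral equals product integral
  have hiter : (∫ u in Set.Ioi (0:ℝ), ∫ v in Set.Ioi (0:ℝ),
      u ^ (-α) * v ^ (-α) * Real.exp (-θ * u) * Real.exp (-θ * v) *
        |u - v| ^ (2 * H - 2)) = ∫ p, f p ∂(μ.prod μ) := by
    exact MeasureTheory.integral_integral hint1
  have hreal : ∫ p, f p ∂(μ.prod μ) ≤ 2 * (B * (Real.Gamma s / θ ^ s)) := by
    rw [integral_eq_lintegral_of_nonneg_ae hnn_ae hfm.aestronglyMeasurable]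
    have h := ENNReal.toReal_mono ENNReal.ofReal_ne_top hlin
    rwa [ENNReal.toReal_ofReal (by positivity)] at h
  have hHpos : (0:ℝ) < H * (2 * H - 1) := by nlinarith
  have hB2 : (∫ x in (0:ℝ)..1, x ^ (2 * H - 1 - 1) * (1 - x) ^ (1 - α - 1)) = B := by
    have e1 : (∫ x in (0:ℝ)..1, x ^ (2 * H - 1 - 1) * (1 - x) ^ (1 - α - 1)) =
        ∫ x in (0:ℝ)..1, (fun y : ℝ => y ^ (-α) * (1 - y) ^ (2 * H - 2)) (1 - x) := by
      refine intervalIntegral.integral_congr fun x hx => ?_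
      simp only [sub_sub_cancel]
      rw [show 2 * H - 1 - 1 = 2 * H - 2 by ring, show 1 - α - 1 = -α by ring]
      ring
    rw [e1, intervalIntegral.integral_comp_sub_left
      (fun y : ℝ => y ^ (-α) * (1 - y) ^ (2 * H - 2)) 1]
    norm_num [hB_def]
  rw [hB2, hiter]
  calc H * (2 * H - 1) * ∫ p, f p ∂(μ.prod μ)
      ≤ H * (2 * H - 1) * (2 * (B * (Real.Gamma s / θ ^ s))) :=
        mul_le_mul_of_nonneg_left hreal hHpos.le
    _ = 2 * H * (2 * H - 1) * Real.Gamma s * B / θ ^ s := by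
        field_simp
end

section
/- For every t > 0, H(2H−1) e^{−2θt} ∫_0^t ∫_0^t e^{θs} e^{θr} |s−r|^{2H−2} dr ds = (H(2H−1)/θ) ( ∫_0^t r^{2H−2} e^{−θr} dr − e^{−2θt} ∫_0^t r^{2H−2} e^{θr} dr ). -/
open MeasureTheory Real Set intervalIntegral

private lemma aux_intInt {p : ℝ} (hp : -1 < p) (c a b : ℝ) :
    IntervalIntegrable (fun u => u ^ p * Real.exp (c * u)) volume a b :=
  (intervalIntegral.intervalIntegrable_rpow' hp).mul_continuousOn
    (Continuous.continuousOn (by fun_prop))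

private lemma aux_cont {p : ℝ} (hp : -1 < p) (c : ℝ) {t : ℝ} (ht : 0 ≤ t) :
    ContinuousOn (fun x => ∫ u in (0:ℝ)..x, u ^ p * Real.exp (c * u)) (Icc 0 t) := by
  have := intervalIntegral.continuousOn_primitive_interval' (aux_intInt hp c 0 t) left_mem_uIcc
  rwa [uIcc_of_le ht] at this

private lemma aux_deriv {p : ℝ} (hp : -1 < p) (c : ℝ) {x : ℝ} (hx : 0 < x) :
    HasDerivAt (fun y => ∫ u in (0:ℝ)..y, u ^ p * Real.exp (c * u))
      (x ^ p * Real.exp (c * x)) x := by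
  refine intervalIntegral.integral_hasDerivAt_right (aux_intInt hp c 0 x) ?_ ?_
  · exact ((measurable_id.pow_const p |>.mul (by fun_prop)).stronglyMeasurable).stronglyMeasurableAtFilter
  · exact (Real.continuousAt_rpow_const x p (Or.inl hx.ne')).mul
      ((Real.continuous_exp.comp (continuous_const.mul continuous_id)).continuousAt)

private lemma inner_eq {p θ : ℝ} (hp : -1 < p) {t s : ℝ} (hs0 : 0 ≤ s) (hst : s ≤ t) :
    (∫ r in (0:ℝ)..t, Real.exp (θ * s) * Real.exp (θ * r) * |s - r| ^ p)
      = Real.exp (2 * θ * s) *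
        ((∫ u in (0:ℝ)..s, u ^ p * Real.exp (-θ * u)) +
         (∫ u in (0:ℝ)..(t - s), u ^ p * Real.exp (θ * u))) := by
  -- integrability on the two pieces
  have hbase1 : IntervalIntegrable (fun r => (s - r) ^ p) volume 0 s := by
    have := (intervalIntegral.intervalIntegrable_rpow' hp (a := 0) (b := s)).comp_sub_left s
    simpa using this.symm
  have hbase2 : IntervalIntegrable (fun r => (r - s) ^ p) volume s t := by
    have := (intervalIntegral.intervalIntegrable_rpow' hp (a := 0) (b := t - s)).comp_sub_right s
    simpa using this
  have h1' : IntervalIntegrable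
      (fun r => (s - r) ^ p * (Real.exp (θ * s) * Real.exp (θ * r))) volume 0 s :=
    hbase1.mul_continuousOn (Continuous.continuousOn (by fun_prop))
  have h2' : IntervalIntegrable
      (fun r => (r - s) ^ p * (Real.exp (θ * s) * Real.exp (θ * r))) volume s t :=
    hbase2.mul_continuousOn (Continuous.continuousOn (by fun_prop))
  have hA : IntervalIntegrable
      (fun r => Real.exp (θ * s) * Real.exp (θ * r) * |s - r| ^ p) volume 0 s := by
    rw [intervalIntegrable_iff] at h1' ⊢
    refine h1'.congr_fun (fun r hr => ?_) measurableSet_uIoc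
    rw [uIoc_of_le hs0] at hr
    rw [abs_of_nonneg (by linarith [hr.2])]; ring
  have hB : IntervalIntegrable
      (fun r => Real.exp (θ * s) * Real.exp (θ * r) * |s - r| ^ p) volume s t := by
    rw [intervalIntegrable_iff] at h2' ⊢
    refine h2'.congr_fun (fun r hr => ?_) measurableSet_uIoc
    rw [uIoc_of_le hst] at hr
    rw [abs_of_nonpos (by linarith [hr.1]), neg_sub]; ring
  have hsplit := intervalIntegral.integral_add_adjacent_intervals hA hB
  rw [← hsplit]
  -- first piece
  have e1 : (∫ r in (0:ℝ)..s, Real.exp (θ * s) * Real.exp (θ * r) * |s - r| ^ p)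
      = Real.exp (2 * θ * s) * ∫ u in (0:ℝ)..s, u ^ p * Real.exp (-θ * u) := by
    have hc : (∫ r in (0:ℝ)..s, Real.exp (θ * s) * Real.exp (θ * r) * |s - r| ^ p)
        = ∫ r in (0:ℝ)..s,
            (fun u => Real.exp (2 * θ * s) * (u ^ p * Real.exp (-θ * u))) (s - r) := by
      refine intervalIntegral.integral_congr (fun r hr => ?_)
      rw [uIcc_of_le hs0] at hr
      simp only
      rw [abs_of_nonneg (by linarith [hr.2]), ← Real.exp_add,
        show Real.exp (2 * θ * s) * ((s - r) ^ p * Real.exp (-θ * (s - r)))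
          = Real.exp (2 * θ * s) * Real.exp (-θ * (s - r)) * (s - r) ^ p from by ring,
        ← Real.exp_add]
      congr 1; ring
    rw [hc, intervalIntegral.integral_comp_sub_left
        (fun u => Real.exp (2 * θ * s) * (u ^ p * Real.exp (-θ * u))) s]
    simp [intervalIntegral.integral_const_mul]
  -- second piece
  have e2 : (∫ r in s..t, Real.exp (θ * s) * Real.exp (θ * r) * |s - r| ^ p)
      = Real.exp (2 * θ * s) * ∫ u in (0:ℝ)..(t - s), u ^ p * Real.exp (θ * u) := by
    have hc : (∫ r in s..t, Real.exp (θ * s) * Real.exp (θ * r) * |s - r| ^ p)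
        = ∫ r in s..t,
            (fun u => Real.exp (2 * θ * s) * (u ^ p * Real.exp (θ * u))) (r - s) := by
      refine intervalIntegral.integral_congr (fun r hr => ?_)
      rw [uIcc_of_le hst] at hr
      simp only
      rw [abs_of_nonpos (by linarith [hr.1]), neg_sub, ← Real.exp_add,
        show Real.exp (2 * θ * s) * ((r - s) ^ p * Real.exp (θ * (r - s)))
          = Real.exp (2 * θ * s) * Real.exp (θ * (r - s)) * (r - s) ^ p from by ring,
        ← Real.exp_add]
      congr 1; ring
    rw [hc, intervalIntegral.integral_comp_sub_right
        (fun u => Real.exp (2 * θ * s) * (u ^ p * Real.exp (θ * u))) s]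
    simp [intervalIntegral.integral_const_mul]
  rw [e1, e2]; ring
private lemma aux_parts {p a b : ℝ} (hp : -1 < p) (ha : a ≠ 0) {t : ℝ} (ht : 0 ≤ t) :
    (∫ s in (0:ℝ)..t, Real.exp (a * s) * ∫ u in (0:ℝ)..s, u ^ p * Real.exp (b * u))
      = (Real.exp (a * t) * (∫ u in (0:ℝ)..t, u ^ p * Real.exp (b * u))
          - ∫ u in (0:ℝ)..t, u ^ p * Real.exp ((a + b) * u)) / a := by
  have hphi_int1 : IntervalIntegrable
      (fun s => Real.exp (a * s) * ∫ u in (0:ℝ)..s, u ^ p * Real.exp (b * u)) volume 0 t := by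
    apply ContinuousOn.intervalIntegrable
    rw [uIcc_of_le ht]
    exact (Continuous.continuousOn (by fun_prop)).mul (aux_cont hp b ht)
  have hphi_int2 : IntervalIntegrable
      (fun s => s ^ p * (Real.exp (a * s) * Real.exp (b * s) / a)) volume 0 t :=
    (intervalIntegral.intervalIntegrable_rpow' hp).mul_continuousOn
      (Continuous.continuousOn (by fun_prop))
  have hderiv : ∀ x ∈ Ioo (0:ℝ) t,
      HasDerivAt (fun s => Real.exp (a * s) * (∫ u in (0:ℝ)..s, u ^ p * Real.exp (b * u)) / a)
        (Real.exp (a * x) * (∫ u in (0:ℝ)..x, u ^ p * Real.exp (b * u))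
          + x ^ p * (Real.exp (a * x) * Real.exp (b * x) / a)) x := by
    intro x hx
    have hE : HasDerivAt (fun s : ℝ => Real.exp (a * s)) (Real.exp (a * x) * a) x := by
      simpa using ((hasDerivAt_id x).const_mul a).exp
    have hFd := aux_deriv hp b hx.1
    have h := (hE.mul hFd).div_const a
    refine h.congr_deriv ?_
    field_simp
  have hcont : ContinuousOn
      (fun s => Real.exp (a * s) * (∫ u in (0:ℝ)..s, u ^ p * Real.exp (b * u)) / a) (Icc 0 t) :=
    ((Continuous.continuousOn (by fun_prop)).mul (aux_cont hp b ht)).div_const a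
  have hsum : IntervalIntegrable
      (fun x => Real.exp (a * x) * (∫ u in (0:ℝ)..x, u ^ p * Real.exp (b * u))
        + x ^ p * (Real.exp (a * x) * Real.exp (b * x) / a)) volume 0 t :=
    hphi_int1.add hphi_int2
  have hftc := intervalIntegral.integral_eq_sub_of_hasDeriv_right_of_le ht hcont
    (fun x hx => (hderiv x hx).hasDerivWithinAt) hsum
  rw [intervalIntegral.integral_add hphi_int1 hphi_int2] at hftc
  have h2 : (∫ s in (0:ℝ)..t, s ^ p * (Real.exp (a * s) * Real.exp (b * s) / a))
      = (∫ u in (0:ℝ)..t, u ^ p * Real.exp ((a + b) * u)) / a := by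
    rw [← intervalIntegral.integral_div]
    refine intervalIntegral.integral_congr (fun u _ => ?_)
    rw [← Real.exp_add, show a * u + b * u = (a + b) * u from by ring]
    ring
  rw [h2] at hftc
  norm_num [intervalIntegral.integral_same] at hftc
  rw [sub_div]
  linarith [hftc]

/-- For `1/2 < H < 1`, `θ > 0` and every `t > 0`,
`H(2H−1) e^{−2θt} ∫_0^t ∫_0^t e^{θs} e^{θr} |s−r|^{2H−2} dr ds
  = (H(2H−1)/θ) (∫_0^t r^{2H−2} e^{−θr} dr − e^{−2θt} ∫_0^t r^{2H−2} e^{θr} dr)`. -/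
theorem double_integral_exp_identity
    (H θ : ℝ) (hH1 : 1 / 2 < H) (hH2 : H < 1) (hθ : 0 < θ) :
    ∀ t : ℝ, 0 < t →
      H * (2 * H - 1) * Real.exp (-2 * θ * t) *
          ∫ s in (0:ℝ)..t, ∫ r in (0:ℝ)..t,
            Real.exp (θ * s) * Real.exp (θ * r) * |s - r| ^ (2 * H - 2) =
        (H * (2 * H - 1) / θ) *
          ((∫ r in (0:ℝ)..t, r ^ (2 * H - 2) * Real.exp (-θ * r)) -
            Real.exp (-2 * θ * t) * ∫ r in (0:ℝ)..t, r ^ (2 * H - 2) * Real.exp (θ * r)) := by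
  intro t ht
  have hp : (-1:ℝ) < 2 * H - 2 := by linarith
  have ht' : (0:ℝ) ≤ t := ht.le
  have hi1 : IntervalIntegrable (fun s => Real.exp (2 * θ * s) *
      (∫ u in (0:ℝ)..s, u ^ (2 * H - 2) * Real.exp (-θ * u))) volume 0 t := by
    apply ContinuousOn.intervalIntegrable
    rw [uIcc_of_le ht']
    exact (Continuous.continuousOn (by fun_prop)).mul (aux_cont hp (-θ) ht')
  have hi2 : IntervalIntegrable (fun s => Real.exp (2 * θ * s) *
      (∫ u in (0:ℝ)..(t - s), u ^ (2 * H - 2) * Real.exp (θ * u))) volume 0 t := by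
    apply ContinuousOn.intervalIntegrable
    rw [uIcc_of_le ht']
    refine (Continuous.continuousOn (by fun_prop)).mul ?_
    refine (aux_cont hp θ ht').comp
      (Continuous.continuousOn (by fun_prop : Continuous fun x : ℝ => t - x)) ?_
    intro x hx
    simp only [mem_Icc] at hx ⊢
    exact ⟨by linarith [hx.2], by linarith [hx.1]⟩
  have h1 : (∫ s in (0:ℝ)..t, ∫ r in (0:ℝ)..t,
        Real.exp (θ * s) * Real.exp (θ * r) * |s - r| ^ (2 * H - 2))
      = (∫ s in (0:ℝ)..t, Real.exp (2 * θ * s) *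
          (∫ u in (0:ℝ)..s, u ^ (2 * H - 2) * Real.exp (-θ * u)))
        + ∫ s in (0:ℝ)..t, Real.exp (2 * θ * s) *
            (∫ u in (0:ℝ)..(t - s), u ^ (2 * H - 2) * Real.exp (θ * u)) := by
    rw [← intervalIntegral.integral_add hi1 hi2]
    refine intervalIntegral.integral_congr (fun s hs => ?_)
    rw [uIcc_of_le ht'] at hs
    rw [inner_eq hp hs.1 hs.2]
    ring
  have h3 : (∫ s in (0:ℝ)..t, Real.exp (2 * θ * s) *
        (∫ u in (0:ℝ)..(t - s), u ^ (2 * H - 2) * Real.exp (θ * u)))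
      = Real.exp (2 * θ * t) * ∫ s in (0:ℝ)..t, Real.exp (-2 * θ * s) *
          ∫ u in (0:ℝ)..s, u ^ (2 * H - 2) * Real.exp (θ * u) := by
    have hc : (∫ s in (0:ℝ)..t, Real.exp (2 * θ * s) *
          (∫ u in (0:ℝ)..(t - s), u ^ (2 * H - 2) * Real.exp (θ * u)))
        = ∫ s in (0:ℝ)..t, (fun y => Real.exp (2 * θ * t) * (Real.exp (-2 * θ * y) *
            ∫ u in (0:ℝ)..y, u ^ (2 * H - 2) * Real.exp (θ * u))) (t - s) := by
      refine intervalIntegral.integral_congr (fun s _ => ?_)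
      simp only
      rw [show Real.exp (2 * θ * t) * (Real.exp (-2 * θ * (t - s)) *
            ∫ u in (0:ℝ)..(t - s), u ^ (2 * H - 2) * Real.exp (θ * u))
          = Real.exp (2 * θ * t) * Real.exp (-2 * θ * (t - s)) *
            ∫ u in (0:ℝ)..(t - s), u ^ (2 * H - 2) * Real.exp (θ * u) from by ring,
        ← Real.exp_add, show 2 * θ * t + -2 * θ * (t - s) = 2 * θ * s from by ring]
    rw [hc, intervalIntegral.integral_comp_sub_left
        (fun y => Real.exp (2 * θ * t) * (Real.exp (-2 * θ * y) *
          ∫ u in (0:ℝ)..y, u ^ (2 * H - 2) * Real.exp (θ * u))) t]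
    simp only [sub_self, sub_zero]
    rw [intervalIntegral.integral_const_mul]
  have h4 := aux_parts (a := 2 * θ) (b := -θ) hp (by positivity) ht'
  rw [show (2 * θ + -θ) = θ from by ring] at h4
  have h5 := aux_parts (a := -2 * θ) (b := θ) hp
    (mul_ne_zero (by norm_num) hθ.ne') ht'
  rw [show (-2 * θ + θ) = -θ from by ring] at h5
  have he : Real.exp (-2 * θ * t) * Real.exp (2 * θ * t) = 1 := by
    rw [← Real.exp_add, show -2 * θ * t + 2 * θ * t = 0 from by ring, Real.exp_zero]
  rw [h1, h3, h4, h5]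
  linear_combination (H * (2 * H - 1) / θ / 2) *
    (2 * (∫ u in (0:ℝ)..t, u ^ (2 * H - 2) * Real.exp (-θ * u)) -
      Real.exp (-2 * θ * t) * ∫ u in (0:ℝ)..t, u ^ (2 * H - 2) * Real.exp (θ * u)) * he
end

section
/- For every t > 0, (H²(2H−1)²/2) ∫_{[0,t]^4} e^{−θ|v−s|} e^{−θ|u−r|} |v−u|^{2H−2} |s−r|^{2H−2} du dv dr ds ≤ t^{4H}/2; consequently e^{−θt} times the left-hand side tends to 0 as t → ∞. (This is the bound on E[( ∫_0^t δB_s e^{−θs} ∫_0^s δB_r e^{θr} )²] in the second Wiener chaos.) -/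
open MeasureTheory Real Filter

set_option maxHeartbeats 1000000

/-- Interval integrability of the kernel `x ↦ |c - x| ^ p` for `-1 < p`. -/
lemma absKerII {p : ℝ} (hp : -1 < p) (c a b : ℝ) :
    IntervalIntegrable (fun x : ℝ => |c - x| ^ p) volume a b := by
  have base : ∀ b : ℝ, IntervalIntegrable (fun x : ℝ => |x| ^ p) volume 0 b := by
    intro b
    rcases le_or_gt 0 b with hb | hb
    · refine (intervalIntegral.intervalIntegrable_rpow' hp (a := 0) (b := b)).mono_fun' ?_ ?_
      · exact ((by fun_prop : Measurable fun x : ℝ => |x| ^ p)).aestronglyMeasurable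
      · filter_upwards [MeasureTheory.ae_restrict_mem measurableSet_uIoc] with x hx
        rw [Set.uIoc_of_le hb] at hx
        simp only [Real.norm_eq_abs]
        rw [abs_of_nonneg (Real.rpow_nonneg (abs_nonneg x) p),
          abs_of_nonneg hx.1.le]
    · have g2 : IntervalIntegrable (fun x : ℝ => (-x) ^ p) volume 0 b := by
        have h0 := intervalIntegral.intervalIntegrable_rpow' (a := 0) (b := -b) hp
        have h1 := (IntervalIntegrable.iff_comp_neg (f := fun x : ℝ => x ^ p)).mp h0
        simpa using h1
      refine g2.mono_fun' ?_ ?_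
      · exact ((by fun_prop : Measurable fun x : ℝ => |x| ^ p)).aestronglyMeasurable
      · filter_upwards [MeasureTheory.ae_restrict_mem measurableSet_uIoc] with x hx
        rw [Set.uIoc_comm, Set.uIoc_of_le hb.le] at hx
        simp only [Real.norm_eq_abs]
        rw [abs_of_nonneg (Real.rpow_nonneg (abs_nonneg x) p),
          abs_of_nonpos hx.2]
  have t1 : IntervalIntegrable (fun x : ℝ => |x - c| ^ p) volume a b := by
    have h2 := ((base (a - c)).symm.trans (base (b - c))).comp_sub_right c
    simpa using h2
  have h3 : (fun x : ℝ => |x - c| ^ p) = fun x : ℝ => |c - x| ^ p :=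
    funext fun x => by rw [abs_sub_comm]
  exact h3 ▸ t1

/-- Evaluation of `∫_0^t |v - u|^p du` for `0 ≤ v ≤ t`. -/
lemma kerEval {p : ℝ} (hp : -1 < p) (hq : 0 < p + 1) {t v : ℝ} (hv0 : 0 ≤ v) (hvt : v ≤ t) :
    (∫ u in (0:ℝ)..t, |v - u| ^ p) = (v ^ (p + 1) + (t - v) ^ (p + 1)) / (p + 1) := by
  have hq' : p + 1 ≠ 0 := ne_of_gt hq
  have h1 : (∫ u in (0:ℝ)..v, |v - u| ^ p) = v ^ (p + 1) / (p + 1) := by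
    have e : Set.EqOn (fun u : ℝ => |v - u| ^ p) (fun u : ℝ => (v - u) ^ p) (Set.uIcc 0 v) := by
      intro u hu
      rw [Set.uIcc_of_le hv0] at hu
      simp only
      rw [abs_of_nonneg (by linarith [hu.2] : (0:ℝ) ≤ v - u)]
    rw [intervalIntegral.integral_congr e,
      intervalIntegral.integral_comp_sub_left (fun x : ℝ => x ^ p) v]
    simp only [sub_self, sub_zero]
    rw [integral_rpow (Or.inl hp), Real.zero_rpow hq', sub_zero]
  have h2 : (∫ u in v..t, |v - u| ^ p) = (t - v) ^ (p + 1) / (p + 1) := by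
    have e : Set.EqOn (fun u : ℝ => |v - u| ^ p) (fun u : ℝ => (u - v) ^ p) (Set.uIcc v t) := by
      intro u hu
      rw [Set.uIcc_of_le hvt] at hu
      simp only
      rw [abs_sub_comm, abs_of_nonneg (by linarith [hu.1] : (0:ℝ) ≤ u - v)]
    rw [intervalIntegral.integral_congr e,
      intervalIntegral.integral_comp_sub_right (fun x : ℝ => x ^ p) v]
    simp only [sub_self]
    rw [integral_rpow (Or.inl hp), Real.zero_rpow hq', sub_zero]
  rw [← intervalIntegral.integral_add_adjacent_intervals (absKerII hp v 0 v) (absKerII hp v v t),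
    h1, h2]
  ring

lemma quad_nonneg (H θ t : ℝ) (ht : 0 ≤ t) :
    0 ≤ ∫ s in (0:ℝ)..t, ∫ r in (0:ℝ)..t, ∫ v in (0:ℝ)..t, ∫ u in (0:ℝ)..t,
        Real.exp (-θ * |v - s|) * Real.exp (-θ * |u - r|) *
          |v - u| ^ (2 * H - 2) * |s - r| ^ (2 * H - 2) := by
  refine intervalIntegral.integral_nonneg ht fun s _ => ?_
  refine intervalIntegral.integral_nonneg ht fun r _ => ?_
  refine intervalIntegral.integral_nonneg ht fun v _ => ?_
  refine intervalIntegral.integral_nonneg ht fun u _ => ?_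
  have h1 := Real.rpow_nonneg (abs_nonneg (v - u)) (2 * H - 2)
  have h2 := Real.rpow_nonneg (abs_nonneg (s - r)) (2 * H - 2)
  positivity

lemma quad_bound (H θ : ℝ) (hH1 : 1 / 2 < H) (hH2 : H < 1) (hθ : 0 < θ) {t : ℝ} (ht : 0 < t) :
    (H ^ 2 * (2 * H - 1) ^ 2 / 2) *
        (∫ s in (0:ℝ)..t, ∫ r in (0:ℝ)..t, ∫ v in (0:ℝ)..t, ∫ u in (0:ℝ)..t,
          Real.exp (-θ * |v - s|) * Real.exp (-θ * |u - r|) *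
            |v - u| ^ (2 * H - 2) * |s - r| ^ (2 * H - 2)) ≤ t ^ (4 * H) / 2 := by
  set p : ℝ := 2 * H - 2 with hpdef
  clear_value p
  have hp : (-1 : ℝ) < p := by rw [hpdef]; linarith
  have hq : (0 : ℝ) < p + 1 := by rw [hpdef]; linarith
  have hq2 : (0 : ℝ) < p + 2 := by rw [hpdef]; linarith
  have ht0 : (0 : ℝ) ≤ t := ht.le
  have kpos : ∀ x : ℝ, 0 ≤ |x| ^ p := fun x => Real.rpow_nonneg (abs_nonneg x) p
  have expos : ∀ x : ℝ, (0 : ℝ) ≤ Real.exp x := fun x => (Real.exp_pos x).le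
  have expLe : ∀ x : ℝ, Real.exp (-θ * |x|) ≤ 1 := by
    intro x
    rw [Real.exp_le_one_iff]
    have := mul_nonneg hθ.le (abs_nonneg x)
    linarith
  -- the function A
  have A_nonneg : ∀ v : ℝ, 0 ≤ ∫ u in (0:ℝ)..t, |v - u| ^ p := fun v =>
    intervalIntegral.integral_nonneg ht0 fun u _ => kpos _
  have A_eval : ∀ v ∈ Set.Icc (0:ℝ) t,
      (∫ u in (0:ℝ)..t, |v - u| ^ p) = (v ^ (p + 1) + (t - v) ^ (p + 1)) / (p + 1) :=
    fun v hv => kerEval hp hq hv.1 hv.2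
  have contG : Continuous fun v : ℝ => (v ^ (p + 1) + (t - v) ^ (p + 1)) / (p + 1) := by
    apply Continuous.div_const
    exact (continuous_id.rpow_const fun _ => Or.inr hq.le).add
      ((continuous_const.sub continuous_id).rpow_const fun _ => Or.inr hq.le)
  have II_A : IntervalIntegrable (fun v => ∫ u in (0:ℝ)..t, |v - u| ^ p) volume 0 t := by
    rw [intervalIntegrable_iff]
    refine (intervalIntegrable_iff.mp (contG.intervalIntegrable 0 t)).congr_fun ?_
      measurableSet_uIoc
    intro v hv
    rw [Set.uIoc_of_le ht0] at hv
    exact (A_eval v ⟨hv.1.le, hv.2⟩).symm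
  set M : ℝ := 2 * t ^ (p + 2) / ((p + 1) * (p + 2)) with hMdef
  clear_value M
  have hMdouble : (∫ v in (0:ℝ)..t, ∫ u in (0:ℝ)..t, |v - u| ^ p) = M := by
    have h1 : (-1 : ℝ) < p + 1 := by linarith
    calc (∫ v in (0:ℝ)..t, ∫ u in (0:ℝ)..t, |v - u| ^ p)
        = ∫ v in (0:ℝ)..t, (v ^ (p + 1) + (t - v) ^ (p + 1)) / (p + 1) :=
          intervalIntegral.integral_congr fun v hv =>
            A_eval v (by rwa [Set.uIcc_of_le ht0] at hv)
      _ = ((∫ v in (0:ℝ)..t, v ^ (p + 1)) + ∫ v in (0:ℝ)..t, (t - v) ^ (p + 1)) / (p + 1) := by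
          have i1 : IntervalIntegrable (fun x : ℝ => x ^ (p + 1)) volume 0 t :=
            intervalIntegral.intervalIntegrable_rpow' h1
          have i2 : IntervalIntegrable (fun x : ℝ => (t - x) ^ (p + 1)) volume 0 t := by
            have h2 := (intervalIntegral.intervalIntegrable_rpow' (a := t)
              (b := 0) (r := p + 1) h1).comp_sub_left t
            simpa using h2
          rw [intervalIntegral.integral_div, intervalIntegral.integral_add i1 i2]
      _ = (t ^ (p + 2) / (p + 2) + t ^ (p + 2) / (p + 2)) / (p + 1) := by
          rw [integral_rpow (Or.inl h1),
            intervalIntegral.integral_comp_sub_left (fun x : ℝ => x ^ (p + 1)) t]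
          simp only [sub_self, sub_zero]
          rw [integral_rpow (Or.inl h1),
            Real.zero_rpow (ne_of_gt (by linarith : (0:ℝ) < p + 1 + 1)), sub_zero,
            show p + 1 + 1 = p + 2 by ring]
      _ = M := by rw [hMdef]; field_simp; ring
  have M_nonneg : 0 ≤ M := by
    rw [← hMdouble]
    exact intervalIntegral.integral_nonneg ht0 fun v _ => A_nonneg v
  -- the function B
  set B : ℝ → ℝ → ℝ := fun v r => ∫ u in (0:ℝ)..t, Real.exp (-θ * |u - r|) * |v - u| ^ p
    with hB
  clear_value B
  have II_B : ∀ v r : ℝ,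
      IntervalIntegrable (fun u => Real.exp (-θ * |u - r|) * |v - u| ^ p) volume 0 t := by
    intro v r
    refine (absKerII hp v 0 t).mono_fun' ?_ (Filter.Eventually.of_forall fun u => ?_)
    · exact ((by fun_prop :
        Measurable fun u : ℝ => Real.exp (-θ * |u - r|) * |v - u| ^ p)).aestronglyMeasurable
    · simp only [Real.norm_eq_abs]
      rw [abs_of_nonneg (mul_nonneg (expos _) (kpos _))]
      exact mul_le_of_le_one_left (kpos _) (expLe _)
  have B_nonneg : ∀ v r : ℝ, 0 ≤ B v r := by
    intro v r
    simp only [hB]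
    exact intervalIntegral.integral_nonneg ht0 fun u _ => mul_nonneg (expos _) (kpos _)
  have B_le_A : ∀ v r : ℝ, B v r ≤ ∫ u in (0:ℝ)..t, |v - u| ^ p := by
    intro v r
    simp only [hB]
    exact intervalIntegral.integral_mono_on ht0 (II_B v r) (absKerII hp v 0 t)
      fun u _ => mul_le_of_le_one_left (kpos _) (expLe _)
  have measB : StronglyMeasurable fun z : ℝ × ℝ => B z.2 z.1 := by
    rw [hB]
    simp only [intervalIntegral.integral_of_le ht0]
    exact StronglyMeasurable.integral_prod_right'
      (f := fun w : (ℝ × ℝ) × ℝ => Real.exp (-θ * |w.2 - w.1.1|) * |w.1.2 - w.2| ^ p)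
      ((by fun_prop :
        Measurable fun w : (ℝ × ℝ) × ℝ =>
          Real.exp (-θ * |w.2 - w.1.1|) * |w.1.2 - w.2| ^ p).stronglyMeasurable)
  -- the function C
  set C : ℝ → ℝ → ℝ := fun s r => ∫ v in (0:ℝ)..t, Real.exp (-θ * |v - s|) * B v r with hC
  clear_value C
  have C_nonneg : ∀ s r : ℝ, 0 ≤ C s r := by
    intro s r
    simp only [hC]
    exact intervalIntegral.integral_nonneg ht0 fun v _ => mul_nonneg (expos _) (B_nonneg v r)
  have C_le : ∀ s r : ℝ, C s r ≤ M := by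
    intro s r
    rw [hC]
    simp only
    have IIf : IntervalIntegrable (fun v => Real.exp (-θ * |v - s|) * B v r) volume 0 t := by
      refine II_A.mono_fun' ?_ (Filter.Eventually.of_forall fun v => ?_)
      · refine (StronglyMeasurable.mul ?_ (measB.comp_measurable
          ((measurable_const.prodMk measurable_id) : Measurable fun v : ℝ =>
            ((r, v) : ℝ × ℝ)))).aestronglyMeasurable
        exact (by fun_prop : Measurable fun v : ℝ => Real.exp (-θ * |v - s|)).stronglyMeasurable
      · simp only [Real.norm_eq_abs]
        rw [abs_of_nonneg (mul_nonneg (expos _) (B_nonneg v r))]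
        exact le_trans (mul_le_of_le_one_left (B_nonneg v r) (expLe _)) (B_le_A v r)
    calc (∫ v in (0:ℝ)..t, Real.exp (-θ * |v - s|) * B v r)
        ≤ ∫ v in (0:ℝ)..t, ∫ u in (0:ℝ)..t, |v - u| ^ p :=
          intervalIntegral.integral_mono_on ht0 IIf II_A fun v _ =>
            le_trans (mul_le_of_le_one_left (B_nonneg v r) (expLe _)) (B_le_A v r)
      _ = M := hMdouble
  have measC : StronglyMeasurable fun z : ℝ × ℝ => C z.1 z.2 := by
    rw [hC]
    simp only [intervalIntegral.integral_of_le ht0]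
    refine StronglyMeasurable.integral_prod_right'
      (f := fun w : (ℝ × ℝ) × ℝ => Real.exp (-θ * |w.2 - w.1.1|) * B w.2 w.1.2) ?_
    refine StronglyMeasurable.mul ?_ (measB.comp_measurable
      ((measurable_fst.snd.prodMk measurable_snd) :
        Measurable fun w : (ℝ × ℝ) × ℝ => ((w.1.2, w.2) : ℝ × ℝ)))
    exact (by fun_prop :
      Measurable fun w : (ℝ × ℝ) × ℝ => Real.exp (-θ * |w.2 - w.1.1|)).stronglyMeasurable
  -- rewriting the quadruple integral
  have e_u : ∀ s r v : ℝ,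
      (∫ u in (0:ℝ)..t, Real.exp (-θ * |v - s|) * Real.exp (-θ * |u - r|) *
        |v - u| ^ p * |s - r| ^ p) = Real.exp (-θ * |v - s|) * |s - r| ^ p * B v r := by
    intro s r v
    rw [hB]
    simp only
    rw [← intervalIntegral.integral_const_mul]
    exact intervalIntegral.integral_congr fun u _ => by ring
  have e_v : ∀ s r : ℝ,
      (∫ v in (0:ℝ)..t, Real.exp (-θ * |v - s|) * |s - r| ^ p * B v r)
        = |s - r| ^ p * C s r := by
    intro s r
    rw [hC]
    simp only
    rw [← intervalIntegral.integral_const_mul]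
    exact intervalIntegral.integral_congr fun v _ => by ring
  -- step in r
  have step_r : ∀ s : ℝ,
      (∫ r in (0:ℝ)..t, |s - r| ^ p * C s r) ≤ M * ∫ u in (0:ℝ)..t, |s - u| ^ p := by
    intro s
    have II_g : IntervalIntegrable (fun r => |s - r| ^ p * M) volume 0 t :=
      (absKerII hp s 0 t).mul_const M
    have II_f : IntervalIntegrable (fun r => |s - r| ^ p * C s r) volume 0 t := by
      refine II_g.mono_fun' ?_ (Filter.Eventually.of_forall fun r => ?_)
      · refine (StronglyMeasurable.mul
          ((by fun_prop : Measurable fun r : ℝ => |s - r| ^ p).stronglyMeasurable)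
          (measC.comp_measurable ((measurable_const.prodMk measurable_id) :
            Measurable fun r : ℝ => ((s, r) : ℝ × ℝ)))).aestronglyMeasurable
      · simp only [Real.norm_eq_abs]
        rw [abs_of_nonneg (mul_nonneg (kpos _) (C_nonneg s r))]
        exact mul_le_mul_of_nonneg_left (C_le s r) (kpos _)
    calc (∫ r in (0:ℝ)..t, |s - r| ^ p * C s r)
        ≤ ∫ r in (0:ℝ)..t, |s - r| ^ p * M :=
          intervalIntegral.integral_mono_on ht0 II_f II_g fun r _ =>
            mul_le_mul_of_nonneg_left (C_le s r) (kpos _)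
      _ = M * ∫ u in (0:ℝ)..t, |s - u| ^ p := by
          rw [← intervalIntegral.integral_const_mul]
          exact intervalIntegral.integral_congr fun r _ => mul_comm _ _
  -- step in s
  have step_s : (∫ s in (0:ℝ)..t, ∫ r in (0:ℝ)..t, |s - r| ^ p * C s r) ≤ M * M := by
    have II_g2 : IntervalIntegrable (fun s => M * ∫ u in (0:ℝ)..t, |s - u| ^ p) volume 0 t := by
      have : (fun s : ℝ => M * ∫ u in (0:ℝ)..t, |s - u| ^ p)
          = fun s : ℝ => M * (fun v : ℝ => ∫ u in (0:ℝ)..t, |v - u| ^ p) s := rfl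
      rw [this]
      exact II_A.const_mul M
    have nonneg_f2 : ∀ s : ℝ, 0 ≤ ∫ r in (0:ℝ)..t, |s - r| ^ p * C s r := fun s =>
      intervalIntegral.integral_nonneg ht0 fun r _ => mul_nonneg (kpos _) (C_nonneg s r)
    have II_f2 : IntervalIntegrable (fun s => ∫ r in (0:ℝ)..t, |s - r| ^ p * C s r)
        volume 0 t := by
      refine II_g2.mono_fun' ?_ (Filter.Eventually.of_forall fun s => ?_)
      · have sm : StronglyMeasurable fun s : ℝ =>
            ∫ r in (0:ℝ)..t, |s - r| ^ p * C s r := by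
          simp only [intervalIntegral.integral_of_le ht0]
          refine StronglyMeasurable.integral_prod_right'
            (f := fun y : ℝ × ℝ => |y.1 - y.2| ^ p * C y.1 y.2) ?_
          exact StronglyMeasurable.mul
            ((by fun_prop : Measurable fun y : ℝ × ℝ => |y.1 - y.2| ^ p).stronglyMeasurable)
            measC
        exact sm.aestronglyMeasurable
      · simp only [Real.norm_eq_abs]
        rw [abs_of_nonneg (nonneg_f2 s)]
        exact step_r s
    calc (∫ s in (0:ℝ)..t, ∫ r in (0:ℝ)..t, |s - r| ^ p * C s r)
        ≤ ∫ s in (0:ℝ)..t, M * ∫ u in (0:ℝ)..t, |s - u| ^ p :=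
          intervalIntegral.integral_mono_on ht0 II_f2 II_g2 fun s _ => step_r s
      _ = M * ∫ s in (0:ℝ)..t, ∫ u in (0:ℝ)..t, |s - u| ^ p :=
          intervalIntegral.integral_const_mul _ _
      _ = M * M := by rw [hMdouble]
  -- combine
  have key : (∫ s in (0:ℝ)..t, ∫ r in (0:ℝ)..t, ∫ v in (0:ℝ)..t, ∫ u in (0:ℝ)..t,
      Real.exp (-θ * |v - s|) * Real.exp (-θ * |u - r|) *
        |v - u| ^ p * |s - r| ^ p) ≤ M * M := by
    calc (∫ s in (0:ℝ)..t, ∫ r in (0:ℝ)..t, ∫ v in (0:ℝ)..t, ∫ u in (0:ℝ)..t,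
        Real.exp (-θ * |v - s|) * Real.exp (-θ * |u - r|) *
          |v - u| ^ p * |s - r| ^ p)
        = ∫ s in (0:ℝ)..t, ∫ r in (0:ℝ)..t, |s - r| ^ p * C s r := by
          simp only [e_u, e_v]
      _ ≤ M * M := step_s
  have hC0 : (0 : ℝ) ≤ H ^ 2 * (2 * H - 1) ^ 2 / 2 := by positivity
  calc (H ^ 2 * (2 * H - 1) ^ 2 / 2) *
      (∫ s in (0:ℝ)..t, ∫ r in (0:ℝ)..t, ∫ v in (0:ℝ)..t, ∫ u in (0:ℝ)..t,
        Real.exp (-θ * |v - s|) * Real.exp (-θ * |u - r|) *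
          |v - u| ^ p * |s - r| ^ p)
      ≤ (H ^ 2 * (2 * H - 1) ^ 2 / 2) * (M * M) := mul_le_mul_of_nonneg_left key hC0
    _ = t ^ (4 * H) / 2 := by
        subst hpdef
        have harg : t ^ ((4:ℝ) * H) = t ^ (2 * H - 2 + 2) * t ^ (2 * H - 2 + 2) := by
          rw [← Real.rpow_add ht]; congr 1; ring
        rw [hMdef, harg]
        have e1 : 2 * H - 2 + 1 ≠ 0 := ne_of_gt hq
        have e2 : 2 * H - 2 + 2 ≠ 0 := ne_of_gt hq2
        generalize t ^ (2 * H - 2 + 2) = X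
        rw [div_mul_div_comm, mul_div_assoc']
        rw [div_eq_div_iff (by positivity) (by norm_num)]
        ring

/-- For `1/2 < H < 1`, `θ > 0`: for every `t > 0`,
`(H²(2H−1)²/2) ∫_{[0,t]^4} e^{−θ|v−s|} e^{−θ|u−r|} |v−u|^{2H−2} |s−r|^{2H−2} du dv dr ds ≤ t^{4H}/2`,
and consequently `e^{−θt}` times the left-hand side tends to `0` as `t → ∞`. -/
theorem second_chaos_bound_and_tendsto
    (H θ : ℝ) (hH1 : 1 / 2 < H) (hH2 : H < 1) (hθ : 0 < θ) :
    (∀ t : ℝ, 0 < t →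
      (H ^ 2 * (2 * H - 1) ^ 2 / 2) *
          ∫ s in (0:ℝ)..t, ∫ r in (0:ℝ)..t, ∫ v in (0:ℝ)..t, ∫ u in (0:ℝ)..t,
            Real.exp (-θ * |v - s|) * Real.exp (-θ * |u - r|) *
              |v - u| ^ (2 * H - 2) * |s - r| ^ (2 * H - 2) ≤
        t ^ (4 * H) / 2) ∧
    Tendsto (fun t : ℝ =>
        Real.exp (-θ * t) *
          ((H ^ 2 * (2 * H - 1) ^ 2 / 2) *
            ∫ s in (0:ℝ)..t, ∫ r in (0:ℝ)..t, ∫ v in (0:ℝ)..t, ∫ u in (0:ℝ)..t,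
              Real.exp (-θ * |v - s|) * Real.exp (-θ * |u - r|) *
                |v - u| ^ (2 * H - 2) * |s - r| ^ (2 * H - 2)))
      atTop (nhds 0) := by
  constructor
  · intro t ht
    exact quad_bound H θ hH1 hH2 hθ ht
  · have hupper : Tendsto (fun t : ℝ => Real.exp (-θ * t) * (t ^ (4 * H) / 2))
        atTop (nhds 0) := by
      have T := tendsto_rpow_mul_exp_neg_mul_atTop_nhds_zero (4 * H) θ hθ
      have heq : (fun t : ℝ => Real.exp (-θ * t) * (t ^ (4 * H) / 2))
          = fun t : ℝ => (t ^ (4 * H) * Real.exp (-θ * t)) / 2 := funext fun t => by ring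
      rw [heq]
      simpa using T.div_const 2
    refine tendsto_of_tendsto_of_tendsto_of_le_of_le' tendsto_const_nhds hupper ?_ ?_
    · filter_upwards [eventually_gt_atTop (0 : ℝ)] with t ht
      have h1 : (0 : ℝ) ≤ H ^ 2 * (2 * H - 1) ^ 2 / 2 := by positivity
      exact mul_nonneg (Real.exp_pos _).le (mul_nonneg h1 (quad_nonneg H θ t ht.le))
    · filter_upwards [eventually_gt_atTop (0 : ℝ)] with t ht
      exact mul_le_mul_of_nonneg_left (quad_bound H θ hH1 hH2 hθ ht) (Real.exp_pos _).le
end
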